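/- arXiv:1107.4624 — 7 statements merged into one kernel-verified Lean document; each statement's English description precedes it below -/
import Mathlib

section
/- Let C be a vertex cover of G of size k, and let H be a gadget graph for (G, f, b_1, …, b_n). Then the following set is a vertex cover of H of size exactly k + f + m + Σ_{i=1}^n b_i: for each v_i ∈ C, the vertex z_i together with all blue vertices of C^i; for each v_i ∉ C, all red vertices of C^i; for each edge {v_i, v_j} of G with v_i ∈ C, the internal vertex of the path P_ij adjacent to the internal vertex's blue neighbor lying on C^j (if both v_i and v_j are in C, either internal vertex may be chosen); and the central vertex of each of the f copies of the path on three vertices. -/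
/-- A set `C` of vertices is a vertex cover of `G` if every edge of `G`
has at least one endpoint in `C`. -/
def IsVertexCover {V : Type*} (G : SimpleGraph V) (C : Set V) : Prop :=
  ∀ ⦃x y : V⦄, G.Adj x y → x ∈ C ∨ y ∈ C

/-- A gadget graph `H` for `(G, f, b)`.  The pieces are:
* for each vertex `i` of `G`, a cycle `cyc i` on `2 * b i` vertices, colored
  alternately blue (even position) and red (odd position), together with a pendant
  vertex `pend i` whose unique neighbor is the red cycle vertex at position `ρ i`;
* for each edge `{i, j}` of `G`, a three-edge path
  `cyc i (β i j) — inter i j — inter j i — cyc j (β j i)` whose endpoints are blue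
  cycle vertices (distinct for distinct paths) and whose internal vertices belong
  to no other piece;
* `f` disjoint copies of the path on three vertices `p3 t 0 — p3 t 1 — p3 t 2`.
These pieces are pairwise disjoint, and `H` has no further vertices or edges. -/
structure GadgetGraph {n : ℕ} (G : SimpleGraph (Fin n)) (f : ℕ) (b : Fin n → ℕ)
    {W : Type*} (H : SimpleGraph W) where
  cyc : (i : Fin n) → ZMod (2 * b i) → W
  pend : Fin n → W
  inter : (i j : Fin n) → G.Adj i j → W
  p3 : Fin f → Fin 3 → W
  pieces_bij : Function.Bijective
    (fun x : (Σ i : Fin n, ZMod (2 * b i)) ⊕ (Fin n) ⊕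
        (Σ' (i : Fin n) (j : Fin n), G.Adj i j) ⊕ (Fin f × Fin 3) =>
      match x with
      | .inl ⟨i, t⟩ => cyc i t
      | .inr (.inl i) => pend i
      | .inr (.inr (.inl ⟨i, j, h⟩)) => inter i j h
      | .inr (.inr (.inr (t, k))) => p3 t k)
  ρ : (i : Fin n) → ZMod (2 * b i)
  ρ_odd : ∀ i, Odd ((ρ i).val)
  β : (i j : Fin n) → G.Adj i j → ZMod (2 * b i)
  β_even : ∀ i j h, Even ((β i j h).val)
  β_inj : ∀ i j j' (h : G.Adj i j) (h' : G.Adj i j'), β i j h = β i j' h' → j = j'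
  adj_iff : ∀ x y : W, H.Adj x y ↔
    ((∃ i t, (x = cyc i t ∧ y = cyc i (t + 1)) ∨ (y = cyc i t ∧ x = cyc i (t + 1))) ∨
     (∃ i, (x = pend i ∧ y = cyc i (ρ i)) ∨ (y = pend i ∧ x = cyc i (ρ i))) ∨
     (∃ i j h, (x = cyc i (β i j h) ∧ y = inter i j h) ∨
               (y = cyc i (β i j h) ∧ x = inter i j h)) ∨
     (∃ i j h, x = inter i j h ∧ y = inter j i (G.adj_symm h)) ∨
     (∃ t, (x = p3 t 0 ∧ y = p3 t 1) ∨ (y = p3 t 0 ∧ x = p3 t 1) ∨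
           (x = p3 t 1 ∧ y = p3 t 2) ∨ (y = p3 t 1 ∧ x = p3 t 2)))

/-- If `C` is a vertex cover of `G` of size `k` and `H` is a gadget
graph for `(G, f, b)`, then the set consisting of: `pend i` and all blue vertices of the
`i`-th cycle for `i ∈ C`; all red vertices of the `i`-th cycle for `i ∉ C`; one internal
vertex from each path (the one adjacent to the blue endpoint on the cycle of the
non-cover side, either one if both sides are in `C`); and the central vertex of each of
the `f` copies of the 3-vertex path, is a vertex cover of `H` of size exactly
`k + f + m + ∑ i, b i`. -/
theorem stmt0 {n : ℕ} (G : SimpleGraph (Fin n)) [DecidableRel G.Adj]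
    (f : ℕ) (b : Fin n → ℕ) {W : Type*} (H : SimpleGraph W)
    (hniso : ∀ i : Fin n, ∃ j, G.Adj i j)
    (hb2 : ∀ i, 2 ≤ b i)
    (hbdeg : ∀ i, b i = G.degree i ∨ b i = G.degree i + 1 ∨ b i = G.degree i + 2)
    (gg : GadgetGraph G f b H)
    (C : Set (Fin n)) (k : ℕ) (hC : IsVertexCover G C) (hCk : C.ncard = k)
    (P : Set W)
    (hPsub : ∀ x ∈ P, ∃ i, ∃ j, ∃ h : G.Adj i j, x = gg.inter i j h)
    (hPone : ∀ i j (h : G.Adj i j), gg.inter i j h ∈ P ↔ gg.inter j i (G.adj_symm h) ∉ P)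
    (hPsel : ∀ i j (h : G.Adj i j), i ∈ C → j ∉ C → gg.inter j i (G.adj_symm h) ∈ P) :
    IsVertexCover H
      ({x | ∃ i ∈ C, x = gg.pend i} ∪
       {x | ∃ i ∈ C, ∃ t, Even t.val ∧ x = gg.cyc i t} ∪
       {x | ∃ i ∉ C, ∃ t, Odd t.val ∧ x = gg.cyc i t} ∪
       P ∪
       {x | ∃ t : Fin f, x = gg.p3 t 1}) ∧
    ({x | ∃ i ∈ C, x = gg.pend i} ∪
       {x | ∃ i ∈ C, ∃ t, Even t.val ∧ x = gg.cyc i t} ∪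
       {x | ∃ i ∉ C, ∃ t, Odd t.val ∧ x = gg.cyc i t} ∪
       P ∪
       {x | ∃ t : Fin f, x = gg.p3 t 1} : Set W).ncard
      = k + f + G.edgeFinset.card + ∑ i, b i := by
  classical
  obtain ⟨einj, esurj⟩ := gg.pieces_bij
  haveI hNZ : ∀ i, NeZero (2 * b i) := fun i => ⟨by have := hb2 i; omega⟩
  -- parity of consecutive cycle vertices
  have hval : ∀ (i : Fin n) (t : ZMod (2 * b i)), Even ((t + 1).val) ↔ ¬ Even t.val := by
    intro i t
    haveI : Fact (1 < 2 * b i) := ⟨by have := hb2 i; omega⟩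
    rw [ZMod.val_add, ZMod.val_one]
    rw [Nat.even_iff, Nat.even_iff, Nat.mod_mod_of_dvd _ ⟨b i, rfl⟩]
    omega
  -- distinctness lemmas
  have ne_pc : ∀ i i' t, gg.pend i ≠ gg.cyc i' t := fun i i' t h => by
    simpa using @einj (.inr (.inl i)) (.inl ⟨i', t⟩) h
  have ne_pi : ∀ i i' j' h', gg.pend i ≠ gg.inter i' j' h' := fun i i' j' h' h => by
    simpa using @einj (.inr (.inl i)) (.inr (.inr (.inl ⟨i', j', h'⟩))) h
  have ne_p3p : ∀ i t' (m : Fin 3), gg.pend i ≠ gg.p3 t' m := fun i t' m h => by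
    simpa using @einj (.inr (.inl i)) (.inr (.inr (.inr (t', m)))) h
  have ne_ci : ∀ i t i' j' h', gg.cyc i t ≠ gg.inter i' j' h' := fun i t i' j' h' h => by
    simpa using @einj (.inl ⟨i, t⟩) (.inr (.inr (.inl ⟨i', j', h'⟩))) h
  have ne_c3 : ∀ i t t' (m : Fin 3), gg.cyc i t ≠ gg.p3 t' m := fun i t t' m h => by
    simpa using @einj (.inl ⟨i, t⟩) (.inr (.inr (.inr (t', m)))) h
  have ne_i3 : ∀ i j hij t' (m : Fin 3), gg.inter i j hij ≠ gg.p3 t' m := fun i j hij t' m h => by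
    simpa using @einj (.inr (.inr (.inl ⟨i, j, hij⟩))) (.inr (.inr (.inr (t', m)))) h
  have pend_inj : Function.Injective gg.pend := fun i i' h => by
    simpa using @einj (.inr (.inl i)) (.inr (.inl i')) h
  have cycS_inj : Function.Injective (fun p : Σ i, ZMod (2 * b i) => gg.cyc p.1 p.2) := by
    intro p q h
    simpa using @einj (.inl p) (.inl q) h
  have interS_inj : Function.Injective
      (fun p : Σ' (i : Fin n) (j : Fin n), G.Adj i j => gg.inter p.1 p.2.1 p.2.2) := by
    intro p q h
    simpa using @einj (.inr (.inr (.inl p))) (.inr (.inr (.inl q))) h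
  have p3S_inj : Function.Injective (fun t : Fin f => gg.p3 t 1) := by
    intro a a' h
    have := @einj (.inr (.inr (.inr (a, 1)))) (.inr (.inr (.inr (a', 1)))) h
    simpa using this
  refine ⟨?_, ?_⟩
  · -- vertex cover
    intro x y hxy
    rw [gg.adj_iff] at hxy
    simp only [Set.mem_union, Set.mem_setOf_eq]
    rcases hxy with ⟨i, t, ⟨rfl, rfl⟩ | ⟨rfl, rfl⟩⟩ | ⟨i, ⟨rfl, rfl⟩ | ⟨rfl, rfl⟩⟩ |
      ⟨i, j, h, ⟨rfl, rfl⟩ | ⟨rfl, rfl⟩⟩ | ⟨i, j, h, rfl, rfl⟩ |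
      ⟨t, ⟨rfl, rfl⟩ | ⟨rfl, rfl⟩ | ⟨rfl, rfl⟩ | ⟨rfl, rfl⟩⟩
    · -- x = cyc i t, y = cyc i (t+1)
      by_cases hi : i ∈ C
      · by_cases ht : Even t.val
        · exact Or.inl (Or.inl (Or.inl (Or.inl (Or.inr ⟨i, hi, t, ht, rfl⟩))))
        · exact Or.inr (Or.inl (Or.inl (Or.inl (Or.inr ⟨i, hi, t + 1, (hval i t).2 ht, rfl⟩))))
      · by_cases ht : Even t.val
        · refine Or.inr (Or.inl (Or.inl (Or.inr ⟨i, hi, t + 1, ?_, rfl⟩)))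
          exact Nat.not_even_iff_odd.mp (fun he => (hval i t).1 he ht)
        · exact Or.inl (Or.inl (Or.inl (Or.inr ⟨i, hi, t, Nat.not_even_iff_odd.mp ht, rfl⟩)))
    · -- y = cyc i t, x = cyc i (t+1)
      by_cases hi : i ∈ C
      · by_cases ht : Even t.val
        · exact Or.inr (Or.inl (Or.inl (Or.inl (Or.inr ⟨i, hi, t, ht, rfl⟩))))
        · exact Or.inl (Or.inl (Or.inl (Or.inl (Or.inr ⟨i, hi, t + 1, (hval i t).2 ht, rfl⟩))))
      · by_cases ht : Even t.val
        · refine Or.inl (Or.inl (Or.inl (Or.inr ⟨i, hi, t + 1, ?_, rfl⟩)))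
          exact Nat.not_even_iff_odd.mp (fun he => (hval i t).1 he ht)
        · exact Or.inr (Or.inl (Or.inl (Or.inr ⟨i, hi, t, Nat.not_even_iff_odd.mp ht, rfl⟩)))
    · -- x = pend i, y = cyc i (ρ i)
      by_cases hi : i ∈ C
      · exact Or.inl (Or.inl (Or.inl (Or.inl (Or.inl ⟨i, hi, rfl⟩))))
      · exact Or.inr (Or.inl (Or.inl (Or.inr ⟨i, hi, gg.ρ i, gg.ρ_odd i, rfl⟩)))
    · -- y = pend i, x = cyc i (ρ i)
      by_cases hi : i ∈ C
      · exact Or.inr (Or.inl (Or.inl (Or.inl (Or.inl ⟨i, hi, rfl⟩))))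
      · exact Or.inl (Or.inl (Or.inl (Or.inr ⟨i, hi, gg.ρ i, gg.ρ_odd i, rfl⟩)))
    · -- x = cyc i (β i j h), y = inter i j h
      by_cases hi : i ∈ C
      · exact Or.inl (Or.inl (Or.inl (Or.inl (Or.inr ⟨i, hi, gg.β i j h, gg.β_even i j h, rfl⟩))))
      · have hj : j ∈ C := (hC h).resolve_left hi
        exact Or.inr (Or.inl (Or.inr (hPsel j i (G.adj_symm h) hj hi)))
    · -- y = cyc i (β i j h), x = inter i j h
      by_cases hi : i ∈ C
      · exact Or.inr (Or.inl (Or.inl (Or.inl (Or.inr ⟨i, hi, gg.β i j h, gg.β_even i j h, rfl⟩))))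
      · have hj : j ∈ C := (hC h).resolve_left hi
        exact Or.inl (Or.inl (Or.inr (hPsel j i (G.adj_symm h) hj hi)))
    · -- x = inter i j h, y = inter j i (G.symm h)
      by_cases hx : gg.inter i j h ∈ P
      · exact Or.inl (Or.inl (Or.inr hx))
      · exact Or.inr (Or.inl (Or.inr (not_not.mp fun hy => hx ((hPone i j h).mpr hy))))
    · exact Or.inr (Or.inr ⟨t, rfl⟩)
    · exact Or.inl (Or.inr ⟨t, rfl⟩)
    · exact Or.inl (Or.inr ⟨t, rfl⟩)
    · exact Or.inr (Or.inr ⟨t, rfl⟩)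
  · -- cardinality
    haveI hFin : ∀ i, Finite (ZMod (2 * b i)) := fun i => inferInstance
    have hA1 : {x | ∃ i ∈ C, x = gg.pend i} = gg.pend '' C := by
      ext x; simp [Set.mem_image, eq_comm]
    have hA2 : {x | ∃ i ∈ C, ∃ t, Even t.val ∧ x = gg.cyc i t}
        = (fun p : Σ i, ZMod (2 * b i) => gg.cyc p.1 p.2) '' {p | p.1 ∈ C ∧ Even p.2.val} := by
      ext x
      constructor
      · rintro ⟨i, hi, t, ht, rfl⟩; exact ⟨⟨i, t⟩, ⟨hi, ht⟩, rfl⟩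
      · rintro ⟨⟨i, t⟩, ⟨hi, ht⟩, rfl⟩; exact ⟨i, hi, t, ht, rfl⟩
    have hA3 : {x | ∃ i ∉ C, ∃ t, Odd t.val ∧ x = gg.cyc i t}
        = (fun p : Σ i, ZMod (2 * b i) => gg.cyc p.1 p.2) '' {p | p.1 ∉ C ∧ Odd p.2.val} := by
      ext x
      constructor
      · rintro ⟨i, hi, t, ht, rfl⟩; exact ⟨⟨i, t⟩, ⟨hi, ht⟩, rfl⟩
      · rintro ⟨⟨i, t⟩, ⟨hi, ht⟩, rfl⟩; exact ⟨i, hi, t, ht, rfl⟩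
    have hP : P = (fun p : Σ' (i : Fin n) (j : Fin n), G.Adj i j => gg.inter p.1 p.2.1 p.2.2) ''
        {p : Σ' (i : Fin n) (j : Fin n), G.Adj i j | gg.inter p.1 p.2.1 p.2.2 ∈ P} := by
      ext x
      constructor
      · intro hx
        obtain ⟨i, j, h, rfl⟩ := hPsub x hx
        exact ⟨⟨i, j, h⟩, hx, rfl⟩
      · rintro ⟨p, hp, rfl⟩; exact hp
    have hA5 : {x | ∃ t : Fin f, x = gg.p3 t 1} = (fun t : Fin f => gg.p3 t 1) '' Set.univ := by
      ext x; simp [Set.mem_image, eq_comm]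
    rw [hA1, hA2, hA3, hP, hA5]
    -- disjointness
    have D12 : Disjoint (gg.pend '' C)
        ((fun p : Σ i, ZMod (2 * b i) => gg.cyc p.1 p.2) '' {p | p.1 ∈ C ∧ Even p.2.val}) := by
      rw [Set.disjoint_left]
      rintro x ⟨i, hi, rfl⟩ ⟨p, hp, heq⟩
      exact ne_pc i p.1 p.2 heq.symm
    have D13 : Disjoint (gg.pend '' C)
        ((fun p : Σ i, ZMod (2 * b i) => gg.cyc p.1 p.2) '' {p | p.1 ∉ C ∧ Odd p.2.val}) := by
      rw [Set.disjoint_left]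
      rintro x ⟨i, hi, rfl⟩ ⟨p, hp, heq⟩
      exact ne_pc i p.1 p.2 heq.symm
    have D23 : Disjoint
        ((fun p : Σ i, ZMod (2 * b i) => gg.cyc p.1 p.2) '' {p | p.1 ∈ C ∧ Even p.2.val})
        ((fun p : Σ i, ZMod (2 * b i) => gg.cyc p.1 p.2) '' {p | p.1 ∉ C ∧ Odd p.2.val}) := by
      rw [Set.disjoint_image_iff cycS_inj, Set.disjoint_left]
      rintro p ⟨h1, _⟩ ⟨h2, _⟩
      exact h2 h1
    have D1P : Disjoint (gg.pend '' C)
        ((fun p : Σ' (i : Fin n) (j : Fin n), G.Adj i j => gg.inter p.1 p.2.1 p.2.2) ''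
          {p : Σ' (i : Fin n) (j : Fin n), G.Adj i j | gg.inter p.1 p.2.1 p.2.2 ∈ P}) := by
      rw [Set.disjoint_left]
      rintro x ⟨i, hi, rfl⟩ ⟨p, hp, heq⟩
      exact ne_pi i p.1 p.2.1 p.2.2 heq.symm
    have D2P : ∀ (S : Set (Σ i, ZMod (2 * b i))), Disjoint
        ((fun p : Σ i, ZMod (2 * b i) => gg.cyc p.1 p.2) '' S)
        ((fun p : Σ' (i : Fin n) (j : Fin n), G.Adj i j => gg.inter p.1 p.2.1 p.2.2) ''
          {p : Σ' (i : Fin n) (j : Fin n), G.Adj i j | gg.inter p.1 p.2.1 p.2.2 ∈ P}) := by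
      intro S
      rw [Set.disjoint_left]
      rintro x ⟨p, hp, rfl⟩ ⟨q, hq, heq⟩
      exact ne_ci p.1 p.2 q.1 q.2.1 q.2.2 heq.symm
    have D15 : Disjoint (gg.pend '' C) ((fun t : Fin f => gg.p3 t 1) '' Set.univ) := by
      rw [Set.disjoint_left]
      rintro x ⟨i, hi, rfl⟩ ⟨t, _, heq⟩
      exact ne_p3p i t 1 heq.symm
    have D25 : ∀ (S : Set (Σ i, ZMod (2 * b i))), Disjoint
        ((fun p : Σ i, ZMod (2 * b i) => gg.cyc p.1 p.2) '' S)
        ((fun t : Fin f => gg.p3 t 1) '' Set.univ) := by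
      intro S
      rw [Set.disjoint_left]
      rintro x ⟨p, hp, rfl⟩ ⟨t, _, heq⟩
      exact ne_c3 p.1 p.2 t 1 heq.symm
    have DP5 : Disjoint
        ((fun p : Σ' (i : Fin n) (j : Fin n), G.Adj i j => gg.inter p.1 p.2.1 p.2.2) ''
          {p : Σ' (i : Fin n) (j : Fin n), G.Adj i j | gg.inter p.1 p.2.1 p.2.2 ∈ P})
        ((fun t : Fin f => gg.p3 t 1) '' Set.univ) := by
      rw [Set.disjoint_left]
      rintro x ⟨p, hp, rfl⟩ ⟨t, _, heq⟩
      exact ne_i3 p.1 p.2.1 p.2.2 t 1 heq.symm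
    -- finiteness
    have fin1 : (gg.pend '' C).Finite := (Set.toFinite C).image _
    have fin2 : ((fun p : Σ i, ZMod (2 * b i) => gg.cyc p.1 p.2) ''
        {p | p.1 ∈ C ∧ Even p.2.val}).Finite := (Set.toFinite _).image _
    have fin3 : ((fun p : Σ i, ZMod (2 * b i) => gg.cyc p.1 p.2) ''
        {p | p.1 ∉ C ∧ Odd p.2.val}).Finite := (Set.toFinite _).image _
    have finP : ((fun p : Σ' (i : Fin n) (j : Fin n), G.Adj i j => gg.inter p.1 p.2.1 p.2.2) ''
        {p : Σ' (i : Fin n) (j : Fin n), G.Adj i j | gg.inter p.1 p.2.1 p.2.2 ∈ P}).Finite :=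
      (Set.toFinite _).image _
    have fin5 : ((fun t : Fin f => gg.p3 t 1) '' Set.univ).Finite := (Set.toFinite _).image _
    rw [Set.ncard_union_eq (((D15.union_left (D25 _)).union_left (D25 _)).union_left DP5)
        (((fin1.union fin2).union fin3).union finP) fin5,
      Set.ncard_union_eq ((D1P.union_left (D2P _)).union_left (D2P _))
        ((fin1.union fin2).union fin3) finP,
      Set.ncard_union_eq (D13.union_left D23) (fin1.union fin2) fin3,
      Set.ncard_union_eq D12 fin1 fin2]
    rw [Set.ncard_image_of_injective _ pend_inj, Set.ncard_image_of_injective _ cycS_inj,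
      Set.ncard_image_of_injective _ cycS_inj, Set.ncard_image_of_injective _ interS_inj,
      Set.ncard_image_of_injective _ p3S_inj]
    -- counts
    have count_even : ∀ i : Fin n,
        (Finset.univ.filter fun t : ZMod (2 * b i) => Even t.val).card = b i := by
      intro i
      have hbi := hb2 i
      have : (Finset.univ.filter fun t : ZMod (2 * b i) => Even t.val).card
          = (Finset.univ : Finset (Fin (b i))).card := by
        refine Finset.card_bij' (fun t ht => (⟨t.val / 2, by
            have := ZMod.val_lt t; omega⟩ : Fin (b i)))
          (fun a _ => ((2 * a.val : ℕ) : ZMod (2 * b i))) (fun a ha => Finset.mem_univ _)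
          ?_ ?_ ?_
        · intro a _
          rw [Finset.mem_filter]
          refine ⟨Finset.mem_univ _, ?_⟩
          rw [ZMod.val_natCast_of_lt (by have := a.2; omega)]
          exact even_two_mul a.val
        · intro t ht
          rw [Finset.mem_filter] at ht
          have h2 : 2 * (t.val / 2) = t.val := Nat.mul_div_cancel' ht.2.two_dvd
          show ((2 * (t.val / 2) : ℕ) : ZMod (2 * b i)) = t
          rw [h2, ZMod.natCast_zmod_val]
        · intro a _
          apply Fin.ext
          show ((2 * a.val : ℕ) : ZMod (2 * b i)).val / 2 = a.val
          rw [ZMod.val_natCast_of_lt (by have := a.2; omega)]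
          omega
      rw [this, Finset.card_univ, Fintype.card_fin]
    have count_odd : ∀ i : Fin n,
        (Finset.univ.filter fun t : ZMod (2 * b i) => Odd t.val).card = b i := by
      intro i
      have h1 := Finset.card_filter_add_card_filter_not
        (s := (Finset.univ : Finset (ZMod (2 * b i)))) (p := fun t => Even t.val)
      have h2 : (Finset.univ.filter fun t : ZMod (2 * b i) => ¬ Even t.val)
          = Finset.univ.filter fun t : ZMod (2 * b i) => Odd t.val := by
        apply Finset.filter_congr
        intro t _
        exact Nat.not_even_iff_odd
      rw [h2, Finset.card_univ, ZMod.card, count_even i] at h1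
      omega
    have count2 : ({p : Σ i, ZMod (2 * b i) | p.1 ∈ C ∧ Even p.2.val}).ncard
        = ∑ i ∈ C.toFinset, b i := by
      have hset : {p : Σ i, ZMod (2 * b i) | p.1 ∈ C ∧ Even p.2.val}
          = ↑(C.toFinset.sigma fun i => Finset.univ.filter fun t : ZMod (2 * b i) => Even t.val) := by
        ext ⟨i, t⟩
        simp [Finset.mem_sigma, Set.mem_toFinset]
      rw [hset, Set.ncard_coe_finset, Finset.card_sigma]
      exact Finset.sum_congr rfl fun i _ => count_even i
    have count3 : ({p : Σ i, ZMod (2 * b i) | p.1 ∉ C ∧ Odd p.2.val}).ncard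
        = ∑ i ∈ C.toFinsetᶜ, b i := by
      have hset : {p : Σ i, ZMod (2 * b i) | p.1 ∉ C ∧ Odd p.2.val}
          = ↑((C.toFinsetᶜ).sigma fun i => Finset.univ.filter fun t : ZMod (2 * b i) => Odd t.val) := by
        ext ⟨i, t⟩
        simp [Finset.mem_sigma, Set.mem_toFinset]
      rw [hset, Set.ncard_coe_finset, Finset.card_sigma]
      exact Finset.sum_congr rfl fun i _ => count_odd i
    have countP : ({p : Σ' (i : Fin n) (j : Fin n), G.Adj i j | gg.inter p.1 p.2.1 p.2.2 ∈ P}).ncard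
        = G.edgeFinset.card := by
      have hinjOn : Set.InjOn (fun p : Σ' (i : Fin n) (j : Fin n), G.Adj i j => s(p.1, p.2.1))
          {p : Σ' (i : Fin n) (j : Fin n), G.Adj i j | gg.inter p.1 p.2.1 p.2.2 ∈ P} := by
        rintro ⟨i, j, hij⟩ h1 ⟨i', j', hij'⟩ h2 hq
        simp only [Sym2.eq, Sym2.rel_iff', Prod.mk.injEq, Prod.swap_prod_mk] at hq
        rcases hq with ⟨rfl, rfl⟩ | ⟨rfl, rfl⟩
        · rfl
        · exact absurd h2 ((hPone _ _ hij).1 h1)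
      have himg : (fun p : Σ' (i : Fin n) (j : Fin n), G.Adj i j => s(p.1, p.2.1)) ''
          {p : Σ' (i : Fin n) (j : Fin n), G.Adj i j | gg.inter p.1 p.2.1 p.2.2 ∈ P}
          = G.edgeSet := by
        ext s
        constructor
        · rintro ⟨⟨i, j, hij⟩, _, rfl⟩
          exact G.mem_edgeSet.mpr hij
        · intro hs
          induction s with
          | _ i j =>
            have hij : G.Adj i j := G.mem_edgeSet.mp hs
            by_cases hmem : gg.inter i j hij ∈ P
            · exact ⟨⟨i, j, hij⟩, hmem, rfl⟩
            · refine ⟨⟨j, i, G.adj_symm hij⟩, not_not.mp fun hb => hmem ((hPone i j hij).mpr hb), ?_⟩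
              exact Sym2.eq_swap
      calc ({p : Σ' (i : Fin n) (j : Fin n), G.Adj i j | gg.inter p.1 p.2.1 p.2.2 ∈ P}).ncard
          = ((fun p : Σ' (i : Fin n) (j : Fin n), G.Adj i j => s(p.1, p.2.1)) ''
            {p : Σ' (i : Fin n) (j : Fin n), G.Adj i j | gg.inter p.1 p.2.1 p.2.2 ∈ P}).ncard :=
            (Set.ncard_image_of_injOn hinjOn).symm
        _ = G.edgeSet.ncard := by rw [himg]
        _ = G.edgeFinset.card := by rw [← SimpleGraph.coe_edgeFinset, Set.ncard_coe_finset]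
    have count5 : (Set.univ : Set (Fin f)).ncard = f := by
      rw [Set.ncard_univ, Nat.card_eq_fintype_card, Fintype.card_fin]
    rw [hCk, count2, count3, countP, count5]
    have hsum : ∑ i ∈ C.toFinset, b i + ∑ i ∈ C.toFinsetᶜ, b i = ∑ i, b i :=
      Finset.sum_add_sum_compl C.toFinset b
    omega
end

section
/- Let H be a gadget graph for (G, f, b_1, …, b_n). Then every vertex cover of H has size at least f + m + Σ_{i=1}^n b_i. -/
/-- Every vertex cover of a gadget graph `H` for `(G, f, b)`
has size at least `f + m + ∑ i, b i`. -/
theorem stmt1 {n : ℕ} (G : SimpleGraph (Fin n)) [DecidableRel G.Adj]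
    (f : ℕ) (b : Fin n → ℕ) {W : Type*} (H : SimpleGraph W)
    (hniso : ∀ i : Fin n, ∃ j, G.Adj i j)
    (hb2 : ∀ i, 2 ≤ b i)
    (hbdeg : ∀ i, b i = G.degree i ∨ b i = G.degree i + 1 ∨ b i = G.degree i + 2)
    (gg : GadgetGraph G f b H)
    (S : Set W) (hS : IsVertexCover H S) :
    f + G.edgeFinset.card + ∑ i, b i ≤ S.ncard := by
  classical
  haveI hNZ : ∀ i, NeZero (2 * b i) := fun i => ⟨by have := hb2 i; omega⟩
  haveI : ∀ i, Finite (ZMod (2 * b i)) := fun i => by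
    haveI := hNZ i; infer_instance
  haveI : Finite (Σ' (i : Fin n) (j : Fin n), G.Adj i j) :=
    Finite.of_injective (fun x => (x.1, x.2.1)) (by
      rintro ⟨i, j, h⟩ ⟨i', j', h'⟩ e
      simp only [Prod.mk.injEq] at e
      obtain ⟨rfl, rfl⟩ := e
      rfl)
  haveI : Finite W := Finite.of_surjective _ gg.pieces_bij.surjective
  have hinj := gg.pieces_bij.injective
  -- choices on the P3 pieces
  have hp3 : ∀ t : Fin f, ∃ k : Fin 3, (k = 0 ∨ k = 1) ∧ gg.p3 t k ∈ S := by
    intro t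
    have hadj : H.Adj (gg.p3 t 0) (gg.p3 t 1) := by
      rw [gg.adj_iff]
      exact Or.inr (Or.inr (Or.inr (Or.inr ⟨t, Or.inl ⟨rfl, rfl⟩⟩)))
    rcases hS hadj with h | h
    · exact ⟨0, Or.inl rfl, h⟩
    · exact ⟨1, Or.inr rfl, h⟩
  choose pk pk01 pkS using hp3
  -- choices on the cycles
  have hcycS : ∀ (i : Fin n) (k : Fin (b i)), ∃ m : ℕ,
      (m = 2 * (k : ℕ) ∨ m = 2 * (k : ℕ) + 1) ∧
        gg.cyc i ((m : ℕ) : ZMod (2 * b i)) ∈ S := by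
    intro i k
    have hadj : H.Adj (gg.cyc i ((2 * (k : ℕ) : ℕ) : ZMod (2 * b i)))
        (gg.cyc i ((2 * (k : ℕ) + 1 : ℕ) : ZMod (2 * b i))) := by
      rw [gg.adj_iff]
      refine Or.inl ⟨i, ((2 * (k : ℕ) : ℕ) : ZMod (2 * b i)), Or.inl ⟨rfl, ?_⟩⟩
      congr 1
      push_cast
      ring
    rcases hS hadj with h | h
    · exact ⟨2 * (k : ℕ), Or.inl rfl, h⟩
    · exact ⟨2 * (k : ℕ) + 1, Or.inr rfl, h⟩
  choose cm cmspec cmS using hcycS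
  -- choices on the connecting paths
  have hedge : ∀ e : G.edgeFinset, ∃ (i j : Fin n) (h : G.Adj i j),
      (e : Sym2 (Fin n)) = s(i, j) ∧ gg.inter i j h ∈ S := by
    rintro ⟨e, he⟩
    rw [SimpleGraph.mem_edgeFinset] at he
    revert he
    induction e using Sym2.ind with
    | _ i j =>
      intro he
      have hadj : G.Adj i j := (G.mem_edgeSet).mp he
      have hHa : H.Adj (gg.inter i j hadj) (gg.inter j i hadj.symm) := by
        rw [gg.adj_iff]
        exact Or.inr (Or.inr (Or.inr (Or.inl ⟨i, j, hadj, rfl, rfl⟩)))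
      rcases hS hHa with h | h
      · exact ⟨i, j, hadj, rfl, h⟩
      · exact ⟨j, i, hadj.symm, Sym2.eq_swap, h⟩
  choose ei ej eh esym eS using hedge
  -- distinctness lemmas from injectivity of the packing map
  have hcc : ∀ {i t i' t'}, gg.cyc i t = gg.cyc i' t' →
      (⟨i, t⟩ : Σ i, ZMod (2 * b i)) = ⟨i', t'⟩ := by
    intro i t i' t' h
    have := hinj (a₁ := Sum.inl ⟨i, t⟩) (a₂ := Sum.inl ⟨i', t'⟩) h
    exact Sum.inl.inj this
  have hii : ∀ {i j h i' j' h'}, gg.inter i j h = gg.inter i' j' h' →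
      i = i' ∧ j = j' := by
    intro i j h i' j' h' e
    have := hinj (a₁ := Sum.inr (Sum.inr (Sum.inl ⟨i, j, h⟩)))
      (a₂ := Sum.inr (Sum.inr (Sum.inl ⟨i', j', h'⟩))) e
    simp only [Sum.inr.injEq, Sum.inl.injEq] at this
    have h1 : i = i' := congrArg (fun x => x.1) this
    subst h1
    have h2 : j = j' := congrArg (fun x => x.2.1) this
    exact ⟨rfl, h2⟩
  have hpp : ∀ {t k t' k'}, gg.p3 t k = gg.p3 t' k' → t = t' ∧ k = k' := by
    intro t k t' k' h
    have := hinj (a₁ := Sum.inr (Sum.inr (Sum.inr (t, k))))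
      (a₂ := Sum.inr (Sum.inr (Sum.inr (t', k')))) h
    simpa using this
  have hpc : ∀ {t k i s}, gg.p3 t k ≠ gg.cyc i s := by
    intro t k i s h
    have := hinj (a₁ := Sum.inr (Sum.inr (Sum.inr (t, k)))) (a₂ := Sum.inl ⟨i, s⟩) h
    simp at this
  have hpi : ∀ {t k i j hij}, gg.p3 t k ≠ gg.inter i j hij := by
    intro t k i j hij h
    have := hinj (a₁ := Sum.inr (Sum.inr (Sum.inr (t, k))))
      (a₂ := Sum.inr (Sum.inr (Sum.inl ⟨i, j, hij⟩))) h
    simp at this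
  have hci : ∀ {i s i' j hij}, gg.cyc i s ≠ gg.inter i' j hij := by
    intro i s i' j hij h
    have := hinj (a₁ := Sum.inl ⟨i, s⟩)
      (a₂ := Sum.inr (Sum.inr (Sum.inl ⟨i', j, hij⟩))) h
    simp at this
  -- the injection
  let D := Fin f ⊕ (↥G.edgeFinset) ⊕ (Σ i : Fin n, Fin (b i))
  let φ : D → W := fun d => match d with
    | .inl t => gg.p3 t (pk t)
    | .inr (.inl e) => gg.inter (ei e) (ej e) (eh e)
    | .inr (.inr ⟨i, k⟩) => gg.cyc i ((cm i k : ℕ) : ZMod (2 * b i))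
  have hmem : ∀ d : D, φ d ∈ S := by
    rintro (t | e | ⟨i, k⟩)
    · exact pkS t
    · exact eS e
    · exact cmS i k
  have hltcm : ∀ (i : Fin n) (k : Fin (b i)), cm i k < 2 * b i := by
    intro i k
    have := k.isLt
    rcases cmspec i k with h1 | h1 <;> omega
  have hφinj : Function.Injective φ := by
    rintro (t | e | ⟨i, k⟩) (t' | e' | ⟨i', k'⟩) h
    · replace h : gg.p3 t (pk t) = gg.p3 t' (pk t') := h
      exact congrArg Sum.inl (hpp h).1
    · exact absurd h hpi
    · replace h : gg.p3 t (pk t) = gg.cyc i' ((cm i' k' : ℕ) : ZMod (2 * b i')) := h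
      exact absurd h hpc
    · exact absurd h.symm hpi
    · replace h : gg.inter (ei e) (ej e) (eh e)
        = gg.inter (ei e') (ej e') (eh e') := h
      obtain ⟨h1, h2⟩ := hii h
      have he : (e : Sym2 (Fin n)) = (e' : Sym2 (Fin n)) := by
        rw [esym e, esym e', h1, h2]
      exact congrArg (fun x => Sum.inr (Sum.inl x)) (Subtype.ext he)
    · exact absurd h.symm hci
    · exact absurd h.symm hpc
    · exact absurd h hci
    · replace h : gg.cyc i ((cm i k : ℕ) : ZMod (2 * b i))
        = gg.cyc i' ((cm i' k' : ℕ) : ZMod (2 * b i')) := h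
      have hs := hcc h
      obtain ⟨h1, ht⟩ := Sigma.mk.inj_iff.mp hs
      subst h1
      have ht' : ((cm i k : ℕ) : ZMod (2 * b i)) = ((cm i k' : ℕ) : ZMod (2 * b i)) :=
        eq_of_heq ht
      have hval : cm i k = cm i k' := by
        have := congrArg ZMod.val ht'
        rwa [ZMod.val_cast_of_lt (hltcm i k), ZMod.val_cast_of_lt (hltcm i k')] at this
      have hk : (k : ℕ) = (k' : ℕ) := by
        rcases cmspec i k with h1 | h1 <;> rcases cmspec i k' with h2 | h2 <;> omega
      have : k = k' := Fin.ext hk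
      subst this
      rfl
  haveI : Finite ↥S := Subtype.finite
  have hcard : Nat.card D ≤ Nat.card ↥S :=
    Nat.card_le_card_of_injective (fun d => (⟨φ d, hmem d⟩ : ↥S))
      (fun d d' h => hφinj (congrArg Subtype.val h))
  have hD : Nat.card D = f + G.edgeFinset.card + ∑ i, b i := by
    simp only [D, Nat.card_eq_fintype_card, Fintype.card_sum, Fintype.card_sigma,
      Fintype.card_coe, Fintype.card_fin]
    ring
  calc f + G.edgeFinset.card + ∑ i, b i = Nat.card D := hD.symm
    _ ≤ Nat.card ↥S := hcard
    _ = S.ncard := Nat.card_coe_set_eq S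
end

section
/- Let H be a gadget graph for (G, f, b_1, …, b_n). If H has a vertex cover of size K, then H has a vertex cover of size at most K that is in the following canonical form: it contains exactly the central vertex from each of the f copies of the path on three vertices; from each path P_ij it contains exactly one of the two internal vertices, and the blue endpoint of P_ij adjacent to the non-selected internal vertex belongs to the cover; and for each i, its intersection with V(C^i) ∪ {z_i} is either exactly the set of red vertices of C^i, or exactly {z_i} together with the set of blue vertices of C^i. -/
section Helpers

/-- parity of `val` flips when adding 1 in `ZMod (2*m)`. -/
lemma zmod_parity_add_one {m : ℕ} (hm : 2 ≤ m) (t : ZMod (2 * m)) :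
    Odd ((t + 1).val) ↔ ¬ Odd t.val := by
  haveI : NeZero (2 * m) := ⟨by omega⟩
  haveI : Fact (1 < 2 * m) := ⟨by omega⟩
  rw [ZMod.val_add, ZMod.val_one]
  rw [Nat.odd_iff, Nat.odd_iff, Nat.mod_mod_of_dvd _ (Dvd.intro m rfl)]
  omega

lemma zmod_parity_add_nat {m : ℕ} (hm : 2 ≤ m) (t : ZMod (2 * m)) (k : ℕ) :
    Odd ((t + (k : ZMod (2*m))).val) ↔ (Odd t.val ↔ Even k) := by
  haveI : NeZero (2 * m) := ⟨by omega⟩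
  rw [ZMod.val_add, ZMod.val_natCast]
  rw [Nat.odd_iff, Nat.odd_iff, Nat.even_iff,
    Nat.mod_mod_of_dvd _ (Dvd.intro m rfl), Nat.add_mod, Nat.mod_mod_of_dvd _ (Dvd.intro m rfl)]
  omega

/-- lower bound for vertex covers of the even cycle, and alternation in the tight case -/
lemma cycle_cover_card {m : ℕ} (hm : 2 ≤ m) (C : Finset (ZMod (2 * m)))
    (hcov : ∀ t, t ∈ C ∨ t + 1 ∈ C) :
    m ≤ C.card ∧ (C.card ≤ m → ∀ t, (t ∈ C ↔ t + 1 ∉ C)) := by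
  classical
  haveI : NeZero (2 * m) := ⟨by omega⟩
  set g : ZMod (2*m) → ℕ := fun t => (if t ∈ C then 1 else 0) + (if t + 1 ∈ C then 1 else 0) with hg
  have hsum : ∑ t : ZMod (2*m), g t = 2 * C.card := by
    rw [Finset.sum_add_distrib]
    have h1 : ∑ t : ZMod (2*m), (if t ∈ C then 1 else 0) = C.card := by
      simp [Finset.sum_ite_mem, Finset.univ_inter]
    have h2 : ∑ t : ZMod (2*m), (if t + 1 ∈ C then 1 else 0) = C.card := by
      rw [← h1]
      exact Finset.sum_nbij' (fun t => t + 1) (fun t => t - 1) (by simp) (by simp)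
        (by intro a _; ring) (by intro a _; ring) (by simp)
    omega
  have hcard : Fintype.card (ZMod (2*m)) = 2 * m := ZMod.card _
  have hone : ∀ t : ZMod (2*m), 1 ≤ g t := by
    intro t; rcases hcov t with h | h <;> simp [hg, h]
  have hlow : 2 * m ≤ 2 * C.card := by
    calc 2 * m = ∑ _t : ZMod (2*m), 1 := by simp [hcard]
    _ ≤ ∑ t : ZMod (2*m), g t := Finset.sum_le_sum (fun t _ => hone t)
    _ = 2 * C.card := hsum
  refine ⟨by omega, fun hle t => ?_⟩
  have hgt : g t ≤ 1 := by
    by_contra hgt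
    push_neg at hgt
    have : ∑ _t : ZMod (2*m), 1 < ∑ t : ZMod (2*m), g t :=
      Finset.sum_lt_sum (fun t _ => hone t) ⟨t, Finset.mem_univ t, hgt⟩
    simp [hcard] at this
    omega
  by_cases h1 : t ∈ C <;> by_cases h2 : t + 1 ∈ C
  · simp [hg, h1, h2] at hgt
  · simp [h1, h2]
  · simp [h1, h2]
  · rcases hcov t with h | h
    · exact absurd h h1
    · exact absurd h h2


open Finset in
lemma cycle_cover_eq_odd {m : ℕ} (hm : 2 ≤ m) (C : Finset (ZMod (2 * m)))
    (hcov : ∀ t, t ∈ C ∨ t + 1 ∈ C) (hle : C.card ≤ m)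
    (ρ : ZMod (2 * m)) (hρC : ρ ∈ C) (hρ : Odd ρ.val) :
    ∀ t, t ∈ C ↔ Odd t.val := by
  haveI : NeZero (2 * m) := ⟨by omega⟩
  have halt := (cycle_cover_card hm C hcov).2 hle
  have key : ∀ k : ℕ, ((ρ + (k : ZMod (2*m))) ∈ C ↔ Even k) := by
    intro k
    induction k with
    | zero => simpa using hρC
    | succ k ih =>
      have he : (ρ + ((k+1 : ℕ) : ZMod (2*m))) = (ρ + (k : ZMod (2*m))) + 1 := by
        push_cast; ring
      rw [he, Nat.even_add_one, ← ih]
      have := halt (ρ + (k : ZMod (2*m)))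
      tauto
  intro t
  have ht : t = ρ + (((t - ρ).val : ℕ) : ZMod (2*m)) := by
    rw [ZMod.natCast_rightInverse (t - ρ)]; ring
  rw [ht, key, zmod_parity_add_nat hm]
  tauto

end Helpers

lemma card_evens {m : ℕ} [NeZero (2*m)] (hm : 2 ≤ m) :
    (Finset.univ.filter (fun t : ZMod (2*m) => Even t.val)).card = m := by
  classical
  have hsplit : (Finset.univ.filter (fun t : ZMod (2*m) => Even t.val)).card
      + (Finset.univ.filter (fun t : ZMod (2*m) => ¬ Even t.val)).card = 2 * m := by
    have := Finset.card_filter_add_card_filter_not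
      (s := (Finset.univ : Finset (ZMod (2*m)))) (p := fun t => Even t.val)
    simpa [ZMod.card (2*m)] using this
  have hEO : (Finset.univ.filter (fun t : ZMod (2*m) => Even t.val)).card
      = (Finset.univ.filter (fun t : ZMod (2*m) => ¬ Even t.val)).card := by
    apply Finset.card_nbij' (fun t => t + 1) (fun t => t - 1)
    · intro t ht
      simp only [Finset.mem_coe, Finset.mem_filter, Finset.mem_univ, true_and] at ht ⊢
      rw [Nat.not_even_iff_odd, zmod_parity_add_one hm]
      rw [← Nat.not_odd_iff_even] at ht
      exact ht
    · intro t ht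
      simp only [Finset.mem_coe, Finset.mem_filter, Finset.mem_univ, true_and] at ht ⊢
      rw [Nat.not_even_iff_odd] at ht
      rw [← Nat.not_odd_iff_even]
      have := zmod_parity_add_one hm (t - 1)
      simp only [sub_add_cancel] at this
      tauto
    · intro t _; ring
    · intro t _; ring
  omega

lemma exists_injOn_of_card_le {α : Type*} [DecidableEq α] (A B : Finset α)
    (h : A.card ≤ B.card) :
    ∃ g : α → α, (∀ a ∈ A, g a ∈ B) ∧ Set.InjOn g A := by
  have hc : Fintype.card ↥A ≤ Fintype.card ↥B := by
    simpa [Fintype.card_coe] using h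
  obtain ⟨e⟩ := Function.Embedding.nonempty_of_card_le hc
  refine ⟨fun a => if ha : a ∈ A then (e ⟨a, ha⟩ : α) else a, ?_, ?_⟩
  · intro a ha; simp only [dif_pos ha]; exact (e ⟨a, ha⟩).2
  · intro a ha a' ha' hgg
    have ha1 : a ∈ A := ha
    have ha2 : a' ∈ A := ha'
    simp only [dif_pos ha1, dif_pos ha2] at hgg
    have := e.injective (Subtype.ext hgg)
    exact congrArg Subtype.val this

namespace Stmt2Aux

variable {n : ℕ} (G : SimpleGraph (Fin n)) (f : ℕ) (b : Fin n → ℕ)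

/-- index type of the pieces -/
abbrev Idx : Type _ :=
  (Σ i : Fin n, ZMod (2 * b i)) ⊕ (Fin n) ⊕
    (Σ' (i : Fin n) (j : Fin n), G.Adj i j) ⊕ (Fin f × Fin 3)

variable {G f b}

/-- index of a vertex in the cycle-plus-pendant piece `i` -/
def iotaP (i : Fin n) : (ZMod (2 * b i)) ⊕ Unit → Idx G f b
  | .inl t => .inl ⟨i, t⟩
  | .inr _ => .inr (.inl i)

lemma iotaP_fst {i i' : Fin n} {p : ZMod (2*b i) ⊕ Unit} {p' : ZMod (2*b i') ⊕ Unit}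
    (h : iotaP (G := G) (f := f) i p = iotaP i' p') : i = i' := by
  cases p <;> cases p' <;> simp only [iotaP] at h <;>
    simp_all [Sigma.ext_iff]

lemma iotaP_snd {i : Fin n} {p p' : ZMod (2*b i) ⊕ Unit}
    (h : iotaP (G := G) (f := f) i p = iotaP i p') : p = p' := by
  cases p <;> cases p' <;> simp_all [iotaP, Sigma.ext_iff]

lemma iotaP_ne_inter {i : Fin n} {p : ZMod (2*b i) ⊕ Unit} {a c : Fin n} {hac : G.Adj a c} :
    iotaP i p ≠ (.inr (.inr (.inl ⟨a, c, hac⟩)) : Idx G f b) := by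
  cases p <;> simp [iotaP]

lemma iotaP_ne_p3 {i : Fin n} {p : ZMod (2*b i) ⊕ Unit} {t : Fin f} {k : Fin 3} :
    iotaP i p ≠ (.inr (.inr (.inr (t, k))) : Idx G f b) := by
  cases p <;> simp [iotaP]

lemma inter_eq_iff {i j i' j' : Fin n} {h : G.Adj i j} {h' : G.Adj i' j'} :
    (.inr (.inr (.inl ⟨i, j, h⟩)) : Idx G f b) = .inr (.inr (.inl ⟨i', j', h'⟩)) ↔
      i = i' ∧ j = j' := by
  constructor
  · intro e
    simp only [Sum.inr.injEq, Sum.inl.injEq] at e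
    injection e with e1 e2
    subst e1
    rw [heq_iff_eq] at e2
    injection e2 with e3 e4
    exact ⟨rfl, e3⟩
  · rintro ⟨rfl, rfl⟩; rfl

/-- selection rule for internal path vertices -/
def sel (blue : Fin n → Prop) (i j : Fin n) : Prop := ¬ blue i ∨ (blue j ∧ j < i)

/-- the canonical cover, as a subset of the index type -/
def canon (blue : Fin n → Prop) : Set (Idx G f b) := fun x =>
  match x with
  | .inl ⟨i, t⟩ => (blue i ∧ Even t.val) ∨ (¬ blue i ∧ Odd t.val)
  | .inr (.inl i) => blue i
  | .inr (.inr (.inl ⟨i, j, _⟩)) => sel blue i j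
  | .inr (.inr (.inr (_, k))) => k = 1

end Stmt2Aux
namespace Stmt2Aux
variable {n : ℕ} {G : SimpleGraph (Fin n)} {f : ℕ} {b : Fin n → ℕ} {W : Type*} {H : SimpleGraph W}

/-- the identification of the index type with the vertices of `H` -/
def phi (gg : GadgetGraph G f b H) : Idx G f b → W
  | .inl ⟨i, t⟩ => gg.cyc i t
  | .inr (.inl i) => gg.pend i
  | .inr (.inr (.inl ⟨i, j, h⟩)) => gg.inter i j h
  | .inr (.inr (.inr (t, k))) => gg.p3 t k

lemma phi_bij (gg : GadgetGraph G f b H) : Function.Bijective (phi gg) := gg.pieces_bij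

@[simp] lemma phi_cyc (gg : GadgetGraph G f b H) (i : Fin n) (t : ZMod (2 * b i)) :
    phi gg (.inl ⟨i, t⟩) = gg.cyc i t := rfl
@[simp] lemma phi_pend (gg : GadgetGraph G f b H) (i : Fin n) :
    phi gg (.inr (.inl i)) = gg.pend i := rfl
@[simp] lemma phi_inter (gg : GadgetGraph G f b H) (i j : Fin n) (h : G.Adj i j) :
    phi gg (.inr (.inr (.inl ⟨i, j, h⟩))) = gg.inter i j h := rfl
@[simp] lemma phi_p3 (gg : GadgetGraph G f b H) (t : Fin f) (k : Fin 3) :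
    phi gg (.inr (.inr (.inr (t, k)))) = gg.p3 t k := rfl
@[simp] lemma phi_iotaP_inl (gg : GadgetGraph G f b H) (i : Fin n) (t : ZMod (2 * b i)) :
    phi gg (iotaP i (.inl t)) = gg.cyc i t := rfl
@[simp] lemma phi_iotaP_inr (gg : GadgetGraph G f b H) (i : Fin n) :
    phi gg (iotaP i (.inr ())) = gg.pend i := rfl
end Stmt2Aux


set_option maxHeartbeats 4000000 in
/-- If a gadget graph `H` for `(G, f, b)` has a vertex cover of size
`K`, then it has a vertex cover of size at most `K` in canonical form: it contains
exactly the central vertex of each copy of the 3-vertex path; exactly one internal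
vertex from each path, the blue endpoint adjacent to the non-selected internal vertex
being in the cover; and from each cycle-plus-pendant piece either exactly the red
vertices, or exactly the pendant vertex together with the blue vertices. -/
theorem stmt2 {n : ℕ} (G : SimpleGraph (Fin n)) [DecidableRel G.Adj]
    (f : ℕ) (b : Fin n → ℕ) {W : Type*} (H : SimpleGraph W)
    (hniso : ∀ i : Fin n, ∃ j, G.Adj i j)
    (hb2 : ∀ i, 2 ≤ b i)
    (hbdeg : ∀ i, b i = G.degree i ∨ b i = G.degree i + 1 ∨ b i = G.degree i + 2)
    (gg : GadgetGraph G f b H)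
    (S : Set W) (hS : IsVertexCover H S) (K : ℕ) (hK : S.ncard = K) :
    ∃ S' : Set W, IsVertexCover H S' ∧ S'.ncard ≤ K ∧
      (∀ (t : Fin f) (l : Fin 3), gg.p3 t l ∈ S' ↔ l = 1) ∧
      (∀ i j (h : G.Adj i j), (gg.inter i j h ∈ S' ↔ gg.inter j i (G.adj_symm h) ∉ S')) ∧
      (∀ i j (h : G.Adj i j), gg.inter i j h ∉ S' → gg.cyc i (gg.β i j h) ∈ S') ∧
      (∀ i : Fin n,
        ((∀ t, (gg.cyc i t ∈ S' ↔ Odd t.val)) ∧ gg.pend i ∉ S') ∨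
        ((∀ t, (gg.cyc i t ∈ S' ↔ Even t.val)) ∧ gg.pend i ∈ S')) := by
  classical
  open Stmt2Aux in
  haveI instb : ∀ i : Fin n, NeZero (2 * b i) := fun i => ⟨by have := hb2 i; omega⟩
  obtain ⟨φinj, φsurj⟩ : Function.Bijective (Stmt2Aux.phi gg) := gg.pieces_bij
  -- the edges of H
  have adjC : ∀ (i : Fin n) (t : ZMod (2*b i)), H.Adj (gg.cyc i t) (gg.cyc i (t+1)) := by
    intro i t; rw [gg.adj_iff]; exact Or.inl ⟨i, t, Or.inl ⟨rfl, rfl⟩⟩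
  have adjP : ∀ i, H.Adj (gg.pend i) (gg.cyc i (gg.ρ i)) := by
    intro i; rw [gg.adj_iff]; exact Or.inr (Or.inl ⟨i, Or.inl ⟨rfl, rfl⟩⟩)
  have adjI : ∀ i j (h : G.Adj i j), H.Adj (gg.cyc i (gg.β i j h)) (gg.inter i j h) := by
    intro i j h; rw [gg.adj_iff]; exact Or.inr (Or.inr (Or.inl ⟨i, j, h, Or.inl ⟨rfl, rfl⟩⟩))
  have adjII : ∀ i j (h : G.Adj i j), H.Adj (gg.inter i j h) (gg.inter j i (G.adj_symm h)) := by
    intro i j h; rw [gg.adj_iff]; exact Or.inr (Or.inr (Or.inr (Or.inl ⟨i, j, h, rfl, rfl⟩)))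
  have adj01 : ∀ t : Fin f, H.Adj (gg.p3 t 0) (gg.p3 t 1) := by
    intro t; rw [gg.adj_iff]; exact Or.inr (Or.inr (Or.inr (Or.inr ⟨t, Or.inl ⟨rfl, rfl⟩⟩)))
  -- the trace of S on the cycles
  obtain ⟨C, hCmem⟩ : ∃ C : (i : Fin n) → Finset (ZMod (2*b i)),
      ∀ i t, t ∈ C i ↔ gg.cyc i t ∈ S :=
    ⟨fun i => Finset.univ.filter (fun t => gg.cyc i t ∈ S), by simp⟩
  have hCcov : ∀ i t, t ∈ C i ∨ t + 1 ∈ C i := by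
    intro i t; rw [hCmem, hCmem]; exact hS (adjC i t)
  have hClb : ∀ i, b i ≤ (C i).card := fun i => (cycle_cover_card (hb2 i) _ (hCcov i)).1
  -- tight pieces
  obtain ⟨tight, htight⟩ : ∃ p : Fin n → Prop,
      ∀ i, p i ↔ (gg.pend i ∉ S ∧ ∀ t, (gg.cyc i t ∈ S ↔ Odd t.val)) :=
    ⟨_, fun i => Iff.rfl⟩
  have htight_of_small : ∀ i, gg.pend i ∉ S → (C i).card ≤ b i → tight i := by
    intro i hp hc
    rw [htight]
    refine ⟨hp, ?_⟩
    have hρ : gg.cyc i (gg.ρ i) ∈ S := by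
      rcases hS (adjP i) with h | h
      · exact absurd h hp
      · exact h
    have := cycle_cover_eq_odd (hb2 i) (C i) (hCcov i) hc (gg.ρ i)
      ((hCmem i _).mpr hρ) (gg.ρ_odd i)
    intro t; rw [← hCmem]; exact this t
  have htight_inter : ∀ i j (h : G.Adj i j), tight i → gg.inter i j h ∈ S := by
    intro i j h ht
    have hβ : gg.cyc i (gg.β i j h) ∉ S := by
      rw [(htight i).mp ht |>.2, ← Nat.not_even_iff_odd]
      exact not_not_intro (gg.β_even i j h)
    rcases hS (adjI i j h) with h' | h'
    · exact absurd h' hβ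
    · exact h'
  have hmid : ∀ i j (h : G.Adj i j), gg.inter i j h ∈ S ∨ gg.inter j i (G.adj_symm h) ∈ S :=
    fun i j h => hS (adjII i j h)
  -- promoted tight pieces, with chosen witnesses
  obtain ⟨T, hT⟩ : ∃ p : Fin n → Prop,
      ∀ i, p i ↔ (tight i ∧ ∃ j, G.Adj i j ∧ tight j ∧ i < j) :=
    ⟨_, fun i => Iff.rfl⟩
  have hT_tight : ∀ i, T i → tight i := fun i hi => ((hT i).mp hi).1
  obtain ⟨wit, hwit⟩ : ∃ wit : (i : Fin n) → T i → Fin n,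
      ∀ i hi, G.Adj i (wit i hi) ∧ tight (wit i hi) ∧ i < wit i hi := by
    choose w hw using fun i (hi : T i) => ((hT i).mp hi).2
    exact ⟨w, hw⟩
  -- blue pieces
  obtain ⟨blue, hblue⟩ : ∃ p : Fin n → Prop, ∀ i, p i ↔ (¬ tight i ∨ T i) :=
    ⟨_, fun i => Iff.rfl⟩
  have hbluecov : ∀ i j, G.Adj i j → blue i ∨ blue j := by
    intro i j hij
    by_contra hc
    push_neg at hc
    obtain ⟨h1, h2⟩ := hc
    rw [hblue] at h1 h2
    push_neg at h1 h2
    rcases lt_or_gt_of_ne (G.ne_of_adj hij) with hlt | hlt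
    · exact h1.2 ((hT i).mpr ⟨h1.1, j, hij, h2.1, hlt⟩)
    · exact h2.2 ((hT j).mpr ⟨h2.1, i, G.adj_symm hij, h1.1, hlt⟩)
  have hsel_total : ∀ i j, G.Adj i j → sel blue i j ∨ sel blue j i := by
    intro i j hij
    by_cases hbi : blue i
    · by_cases hbj : blue j
      · rcases lt_or_gt_of_ne (G.ne_of_adj hij) with hlt | hlt
        · exact Or.inr (Or.inr ⟨hbi, hlt⟩)
        · exact Or.inl (Or.inr ⟨hbj, hlt⟩)
      · exact Or.inr (Or.inl hbj)
    · exact Or.inl (Or.inl hbi)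
  have hsel_excl : ∀ i j, G.Adj i j → ¬ (sel blue i j ∧ sel blue j i) := by
    rintro i j hij ⟨h1, h2⟩
    rcases h1 with h1 | ⟨hbj, hji⟩ <;> rcases h2 with h2 | ⟨hbi, hij'⟩
    · rcases hbluecov i j hij with h | h
      · exact h1 h
      · exact h2 h
    · exact h1 hbi
    · exact h2 hbj
    · exact absurd hij' (not_lt_of_gt hji)
  have hsel_blue : ∀ i j, ¬ sel blue i j → blue i := by
    intro i j h
    by_contra hb
    exact h (Or.inl hb)
  -- parity facts
  have hpar : ∀ (i : Fin n) (t : ZMod (2*b i)), Odd ((t+1).val) ↔ ¬ Odd t.val :=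
    fun i t => zmod_parity_add_one (hb2 i) t
  -- the canonical set
  have hmem : ∀ x, Stmt2Aux.phi gg x ∈ Stmt2Aux.phi gg '' (canon blue) ↔ x ∈ canon blue :=
    fun x => φinj.mem_set_image
  have hm_cyc : ∀ i t, gg.cyc i t ∈ Stmt2Aux.phi gg '' (canon blue) ↔
      ((blue i ∧ Even t.val) ∨ (¬ blue i ∧ Odd t.val)) := fun i t => hmem (.inl ⟨i, t⟩)
  have hm_pend : ∀ i, gg.pend i ∈ Stmt2Aux.phi gg '' (canon blue) ↔ blue i :=
    fun i => hmem (.inr (.inl i))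
  have hm_inter : ∀ i j (h : G.Adj i j),
      gg.inter i j h ∈ Stmt2Aux.phi gg '' (canon blue) ↔ sel blue i j :=
    fun i j h => hmem (.inr (.inr (.inl ⟨i, j, h⟩)))
  have hm_p3 : ∀ (t : Fin f) (l : Fin 3),
      gg.p3 t l ∈ Stmt2Aux.phi gg '' (canon blue) ↔ l = 1 :=
    fun t l => hmem (.inr (.inr (.inr (t, l))))
  refine ⟨Stmt2Aux.phi gg '' (canon blue), ?_, ?_, hm_p3, ?_, ?_, ?_⟩
  · -- vertex cover
    intro x y hxy
    rw [gg.adj_iff] at hxy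
    have hcyccase : ∀ (i : Fin n) (t : ZMod (2*b i)),
        gg.cyc i t ∈ Stmt2Aux.phi gg '' (canon blue) ∨
        gg.cyc i (t+1) ∈ Stmt2Aux.phi gg '' (canon blue) := by
      intro i t
      rw [hm_cyc, hm_cyc]
      have hp := hpar i t
      have he1 : Even t.val ↔ ¬ Odd t.val := Nat.not_odd_iff_even.symm
      have he2 : Even ((t+1).val) ↔ ¬ Odd ((t+1).val) := Nat.not_odd_iff_even.symm
      by_cases hb : blue i <;> by_cases ho : Odd t.val <;> tauto
    have hpendcase : ∀ i : Fin n,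
        gg.pend i ∈ Stmt2Aux.phi gg '' (canon blue) ∨
        gg.cyc i (gg.ρ i) ∈ Stmt2Aux.phi gg '' (canon blue) := by
      intro i
      rw [hm_pend, hm_cyc]
      by_cases hb : blue i
      · exact Or.inl hb
      · exact Or.inr (Or.inr ⟨hb, gg.ρ_odd i⟩)
    have hintercase : ∀ i j (h : G.Adj i j),
        gg.cyc i (gg.β i j h) ∈ Stmt2Aux.phi gg '' (canon blue) ∨
        gg.inter i j h ∈ Stmt2Aux.phi gg '' (canon blue) := by
      intro i j h
      rw [hm_cyc, hm_inter]
      by_cases hs : sel blue i j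
      · exact Or.inr hs
      · exact Or.inl (Or.inl ⟨hsel_blue i j hs, gg.β_even i j h⟩)
    rcases hxy with ⟨i, t, ⟨rfl, rfl⟩ | ⟨rfl, rfl⟩⟩ | ⟨i, ⟨rfl, rfl⟩ | ⟨rfl, rfl⟩⟩ |
      ⟨i, j, h, ⟨rfl, rfl⟩ | ⟨rfl, rfl⟩⟩ | ⟨i, j, h, rfl, rfl⟩ |
      ⟨t, ⟨rfl, rfl⟩ | ⟨rfl, rfl⟩ | ⟨rfl, rfl⟩ | ⟨rfl, rfl⟩⟩
    · exact hcyccase i t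
    · exact (hcyccase i t).symm
    · exact hpendcase i
    · exact (hpendcase i).symm
    · exact hintercase i j h
    · exact (hintercase i j h).symm
    · rw [hm_inter, hm_inter]; exact hsel_total i j h
    · rw [hm_p3, hm_p3]; right; rfl
    · rw [hm_p3, hm_p3]; left; rfl
    · rw [hm_p3, hm_p3]; left; rfl
    · rw [hm_p3, hm_p3]; right; rfl
  · -- cardinality
    have hfinI : Finite (Idx G f b) := by
      have h2 : Finite (Σ' (i : Fin n) (j : Fin n), G.Adj i j) := by
        have hinj2 : Function.Injective
            (fun x : (Σ' (i : Fin n) (j : Fin n), G.Adj i j) => (x.1, x.2.1)) := by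
          rintro ⟨i, j, h⟩ ⟨i', j', h'⟩ he
          simp only [Prod.mk.injEq] at he
          obtain ⟨rfl, rfl⟩ := he
          rfl
        exact Finite.of_injective _ hinj2
      infer_instance
    have hfinW : Finite W := Finite.of_surjective _ φsurj
    obtain ⟨A, hAmem⟩ : ∃ A : (i : Fin n) → Finset (ZMod (2 * b i) ⊕ Unit),
        ∀ i p, p ∈ A i ↔ Stmt2Aux.phi gg (iotaP i p) ∈ S :=
      ⟨fun i => Finset.univ.filter (fun p => Stmt2Aux.phi gg (iotaP i p) ∈ S), by simp⟩
    have hAlb : ∀ i, ¬ tight i → b i + 1 ≤ (A i).card := by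
      intro i hnt
      have hsub : (C i).map ⟨Sum.inl, Sum.inl_injective⟩ ⊆ A i := by
        intro p hp
        rw [Finset.mem_map] at hp
        obtain ⟨t, ht, rfl⟩ := hp
        rw [hAmem]
        simpa using (hCmem i t).mp ht
      by_cases hp : gg.pend i ∈ S
      · have hins : insert (Sum.inr ()) ((C i).map ⟨Sum.inl, Sum.inl_injective⟩) ⊆ A i := by
          intro p hp'
          rw [Finset.mem_insert] at hp'
          rcases hp' with rfl | hp'
          · rw [hAmem]; simpa using hp
          · exact hsub hp'
        have hcard := Finset.card_le_card hins
        rw [Finset.card_insert_of_notMem (by simp), Finset.card_map] at hcard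
        have := hClb i
        omega
      · have hc : ¬ ((C i).card ≤ b i) := fun hle => hnt (htight_of_small i hp hle)
        have hcard := Finset.card_le_card hsub
        rw [Finset.card_map] at hcard
        omega
    obtain ⟨D, hDinl, hDinr, hDcard⟩ : ∃ D : (i : Fin n) → Finset (ZMod (2 * b i) ⊕ Unit),
        (∀ i t, Sum.inl t ∈ D i ↔ Even (ZMod.val t)) ∧ (∀ i, Sum.inr () ∈ D i) ∧
        (∀ i, (D i).card = b i + 1) := by
      refine ⟨fun i => insert (Sum.inr ())
        ((Finset.univ.filter (fun t : ZMod (2 * b i) => Even t.val)).map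
          ⟨Sum.inl, Sum.inl_injective⟩), ?_, ?_, ?_⟩
      · intro i t; simp
      · intro i; simp
      · intro i
        rw [Finset.card_insert_of_notMem (by simp), Finset.card_map, card_evens (hb2 i)]
    obtain ⟨σ, hσmem, hσinj⟩ :
        ∃ σ : (i : Fin n) → (ZMod (2 * b i) ⊕ Unit) → (ZMod (2 * b i) ⊕ Unit),
        (∀ i, ¬ tight i → ∀ p ∈ D i, σ i p ∈ A i) ∧
        (∀ i, ¬ tight i → Set.InjOn (σ i) (D i)) := by
      have hex : ∀ i, ¬ tight i → ∃ g, (∀ p ∈ D i, g p ∈ A i) ∧ Set.InjOn g (D i) :=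
        fun i h => exists_injOn_of_card_le (D i) (A i) (by rw [hDcard]; exact hAlb i h)
      choose g hg using hex
      refine ⟨fun i => if h : ¬ tight i then g i h else id, fun i h => ?_, fun i h => ?_⟩
      · simp only [dif_pos h]; exact (hg i h).1
      · simp only [dif_pos h]; exact (hg i h).2
    obtain ⟨Claimed, hClaimed⟩ : ∃ P : Idx G f b → Prop,
        ∀ x, P x ↔ ∃ (a : Fin n) (ha : T a), x = .inr (.inr (.inl ⟨a, wit a ha, (hwit a ha).1⟩)) :=
      ⟨_, fun x => Iff.rfl⟩
    have hclaim_spec : ∀ i j (h : G.Adj i j),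
        Claimed (.inr (.inr (.inl ⟨i, j, h⟩))) → T i ∧ tight j ∧ i < j := by
      intro i j h hc
      rw [hClaimed] at hc
      obtain ⟨a, ha, e⟩ := hc
      rw [inter_eq_iff] at e
      obtain ⟨rfl, rfl⟩ := e
      exact ⟨ha, (hwit i ha).2.1, (hwit i ha).2.2⟩
    have hclaim_notboth : ∀ i j (hij : G.Adj i j),
        Claimed (.inr (.inr (.inl ⟨i, j, hij⟩))) →
        ¬ Claimed (.inr (.inr (.inl ⟨j, i, G.adj_symm hij⟩))) := by
      intro i j hij h1 h2
      have a1 := hclaim_spec i j hij h1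
      have a2 := hclaim_spec j i (G.adj_symm hij) h2
      exact absurd a2.2.2 (not_lt_of_gt a1.2.2)
    obtain ⟨pick, hpickS, hpickNC, hpickOr⟩ : ∃ pick : (i j : Fin n) → G.Adj i j → Idx G f b,
        (∀ i j h, Stmt2Aux.phi gg (pick i j h) ∈ S) ∧
        (∀ i j h, ¬ Claimed (pick i j h)) ∧
        (∀ i j h, pick i j h = .inr (.inr (.inl ⟨i, j, h⟩)) ∨
                  pick i j h = .inr (.inr (.inl ⟨j, i, G.adj_symm h⟩))) := by
      have hex : ∀ i j (h : G.Adj i j), ∃ x : Idx G f b,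
          Stmt2Aux.phi gg x ∈ S ∧ ¬ Claimed x ∧
          (x = .inr (.inr (.inl ⟨i, j, h⟩)) ∨ x = .inr (.inr (.inl ⟨j, i, G.adj_symm h⟩))) := by
        intro i j h
        by_cases hc1 : Claimed (.inr (.inr (.inl ⟨i, j, h⟩)))
        · obtain ⟨hTi, htj, _⟩ := hclaim_spec i j h hc1
          exact ⟨_, by simpa using htight_inter j i (G.adj_symm h) htj,
            hclaim_notboth i j h hc1, Or.inr rfl⟩
        · by_cases hc2 : Claimed (.inr (.inr (.inl ⟨j, i, G.adj_symm h⟩)))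
          · obtain ⟨hTj, hti, _⟩ := hclaim_spec j i (G.adj_symm h) hc2
            exact ⟨_, by simpa using htight_inter i j h hti, hc1, Or.inl rfl⟩
          · rcases hmid i j h with hm | hm
            · exact ⟨_, by simpa using hm, hc1, Or.inl rfl⟩
            · exact ⟨_, by simpa using hm, hc2, Or.inr rfl⟩
      choose p h1 h2 h3 using hex
      exact ⟨p, h1, h2, h3⟩
    obtain ⟨k3, hk3⟩ : ∃ k3 : Fin f → Fin 3, ∀ t, gg.p3 t (k3 t) ∈ S := by
      have hexk : ∀ t : Fin f, ∃ k, gg.p3 t k ∈ S := by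
        intro t
        rcases hS (adj01 t) with h | h
        exacts [⟨0, h⟩, ⟨1, h⟩]
      choose k hk using hexk
      exact ⟨k, hk⟩
    have hmain : ∃ f0 : Idx G f b → Idx G f b,
        (∀ x ∈ canon blue, Stmt2Aux.phi gg (f0 x) ∈ S) ∧ Set.InjOn f0 (canon blue) := by
      refine ⟨fun x => match x with
        | .inl ⟨i, t⟩ => if ¬ tight i then iotaP i (σ i (.inl t))
            else if T i then iotaP i (.inl (t+1)) else iotaP i (.inl t)
        | .inr (.inl i) => if h : T i then .inr (.inr (.inl ⟨i, wit i h, (hwit i h).1⟩))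
            else if ¬ tight i then iotaP i (σ i (.inr ())) else .inr (.inl i)
        | .inr (.inr (.inl ⟨i, j, h⟩)) => pick i j h
        | .inr (.inr (.inr (t, _))) => .inr (.inr (.inr (t, k3 t))), ?_, ?_⟩
      · -- maps into S
        rintro (⟨i, t⟩ | i | ⟨i, j, hij⟩ | ⟨t, k⟩) hx
        · replace hx : (blue i ∧ Even t.val) ∨ (¬ blue i ∧ Odd t.val) := hx
          show Stmt2Aux.phi gg (if ¬ tight i then iotaP i (σ i (.inl t))
            else if T i then iotaP i (.inl (t+1)) else iotaP i (.inl t)) ∈ S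
          by_cases h1 : tight i
          · rw [if_neg (not_not_intro h1)]
            by_cases h2 : T i
            · rw [if_pos h2]
              have hb : blue i := (hblue i).mpr (Or.inr h2)
              have hev : Even t.val := by tauto
              have hodd : Odd ((t+1).val) := (hpar i t).mpr (Nat.not_odd_iff_even.mpr hev)
              rw [phi_iotaP_inl]
              exact (((htight i).mp h1).2 (t+1)).mpr hodd
            · rw [if_neg h2]
              have hb : ¬ blue i := by
                rw [hblue]; push_neg; exact ⟨h1, h2⟩
              have hod : Odd t.val := by tauto
              rw [phi_iotaP_inl]
              exact (((htight i).mp h1).2 t).mpr hod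
          · rw [if_pos h1]
            have hb : blue i := (hblue i).mpr (Or.inl h1)
            have hev : Even t.val := by tauto
            have hmemD : (Sum.inl t : ZMod (2*b i) ⊕ Unit) ∈ D i := (hDinl i t).mpr hev
            have hmemA := hσmem i h1 _ hmemD
            rw [hAmem] at hmemA
            exact hmemA
        · replace hx : blue i := hx
          show Stmt2Aux.phi gg (if h : T i then .inr (.inr (.inl ⟨i, wit i h, (hwit i h).1⟩))
            else if ¬ tight i then iotaP i (σ i (.inr ())) else .inr (.inl i)) ∈ S
          by_cases h2 : T i
          · rw [dif_pos h2]
            exact htight_inter i (wit i h2) (hwit i h2).1 (hT_tight i h2)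
          · rw [dif_neg h2]
            have h1 : ¬ tight i := by
              rcases (hblue i).mp hx with h | h
              · exact h
              · exact absurd h h2
            rw [if_pos h1]
            have hmemA := hσmem i h1 _ (hDinr i)
            rw [hAmem] at hmemA
            exact hmemA
        · exact hpickS i j hij
        · exact hk3 t
      · -- injective on the canonical set
        have hblue_nt : ∀ i, blue i → ¬ T i → ¬ tight i := fun i hb hT =>
          ((hblue i).mp hb).resolve_right hT
        rintro (⟨i, t⟩ | i | ⟨i, j, hij⟩ | ⟨t, k⟩) hx (⟨i', t'⟩ | i' | ⟨i', j', hij'⟩ | ⟨t', k'⟩) hy he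
        · -- cyc vs cyc
          replace hx : (blue i ∧ Even t.val) ∨ (¬ blue i ∧ Odd t.val) := hx
          replace hy : (blue i' ∧ Even t'.val) ∨ (¬ blue i' ∧ Odd t'.val) := hy
          replace he : (if ¬ tight i then iotaP i (σ i (.inl t)) else if T i then iotaP i (.inl (t+1)) else iotaP i (.inl t)) = (if ¬ tight i' then iotaP i' (σ i' (.inl t')) else if T i' then iotaP i' (.inl (t'+1)) else iotaP i' (.inl t')) := he
          have hii : i = i' := by split_ifs at he <;> exact iotaP_fst he
          subst hii
          by_cases h1 : tight i
          · rw [if_neg (not_not_intro h1), if_neg (not_not_intro h1)] at he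
            by_cases h2 : T i
            · rw [if_pos h2, if_pos h2] at he
              have hsnd := iotaP_snd he
              simp only [Sum.inl.injEq] at hsnd
              have htt : t = t' := by
                have := add_right_cancel hsnd
                exact this
              rw [htt]
            · rw [if_neg h2, if_neg h2] at he
              have hsnd := iotaP_snd he
              simp only [Sum.inl.injEq] at hsnd
              rw [hsnd]
          · rw [if_pos h1, if_pos h1] at he
            have hps := iotaP_snd he
            have hb : blue i := (hblue i).mpr (Or.inl h1)
            have hev : Even t.val := by tauto
            have hev' : Even t'.val := by tauto
            have hsig := hσinj i h1 (Finset.mem_coe.mpr ((hDinl i t).mpr hev))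
              (Finset.mem_coe.mpr ((hDinl i t').mpr hev')) hps
            simp only [Sum.inl.injEq] at hsig
            rw [hsig]
        · -- cyc vs pend
          exfalso
          replace hx : (blue i ∧ Even t.val) ∨ (¬ blue i ∧ Odd t.val) := hx
          replace hy : blue i' := hy
          replace he : (if ¬ tight i then iotaP i (σ i (.inl t)) else if T i then iotaP i (.inl (t+1)) else iotaP i (.inl t)) = (if h : T i' then (.inr (.inr (.inl ⟨i', wit i' h, (hwit i' h).1⟩)) : Idx G f b) else if ¬ tight i' then iotaP i' (σ i' (.inr ())) else .inr (.inl i')) := he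
          by_cases hT' : T i'
          · rw [dif_pos hT'] at he
            split_ifs at he <;> exact iotaP_ne_inter he
          · rw [dif_neg hT', if_pos (hblue_nt i' hy hT')] at he
            have hii : i = i' := by split_ifs at he <;> exact iotaP_fst he
            subst hii
            have h1 : ¬ tight i := hblue_nt i hy hT'
            rw [if_pos h1] at he
            have hps := iotaP_snd he
            have hev : Even t.val := by tauto
            have hsig := hσinj i h1 (Finset.mem_coe.mpr ((hDinl i t).mpr hev))
              (Finset.mem_coe.mpr (hDinr i)) hps
            simp at hsig
        · -- cyc vs inter
          exfalso
          replace he : (if ¬ tight i then iotaP i (σ i (.inl t)) else if T i then iotaP i (.inl (t+1)) else iotaP i (.inl t)) = pick i' j' hij' := he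
          rcases hpickOr i' j' hij' with hp | hp <;> rw [hp] at he <;>
            (split_ifs at he <;> exact iotaP_ne_inter he)
        · -- cyc vs p3
          exfalso
          replace he : (if ¬ tight i then iotaP i (σ i (.inl t)) else if T i then iotaP i (.inl (t+1)) else iotaP i (.inl t)) = .inr (.inr (.inr (t', k3 t'))) := he
          split_ifs at he <;> exact iotaP_ne_p3 he
        · -- pend vs cyc
          exfalso
          replace hx : blue i := hx
          replace hy : (blue i' ∧ Even t'.val) ∨ (¬ blue i' ∧ Odd t'.val) := hy
          replace he : (if h : T i then (.inr (.inr (.inl ⟨i, wit i h, (hwit i h).1⟩)) : Idx G f b) else if ¬ tight i then iotaP i (σ i (.inr ())) else .inr (.inl i)) = (if ¬ tight i' then iotaP i' (σ i' (.inl t')) else if T i' then iotaP i' (.inl (t'+1)) else iotaP i' (.inl t')) := he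
          by_cases hT : T i
          · rw [dif_pos hT] at he
            split_ifs at he <;> exact iotaP_ne_inter he.symm
          · rw [dif_neg hT, if_pos (hblue_nt i hx hT)] at he
            have hii : i = i' := by split_ifs at he <;> exact iotaP_fst he
            subst hii
            have h1 : ¬ tight i := hblue_nt i hx hT
            rw [if_pos h1] at he
            have hps := iotaP_snd he
            have hev : Even t'.val := by tauto
            have hsig := hσinj i h1 (Finset.mem_coe.mpr (hDinr i))
              (Finset.mem_coe.mpr ((hDinl i t').mpr hev)) hps
            simp at hsig
        · -- pend vs pend
          replace hx : blue i := hx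
          replace hy : blue i' := hy
          replace he : (if h : T i then (.inr (.inr (.inl ⟨i, wit i h, (hwit i h).1⟩)) : Idx G f b) else if ¬ tight i then iotaP i (σ i (.inr ())) else .inr (.inl i)) = (if h : T i' then (.inr (.inr (.inl ⟨i', wit i' h, (hwit i' h).1⟩)) : Idx G f b) else if ¬ tight i' then iotaP i' (σ i' (.inr ())) else .inr (.inl i')) := he
          by_cases hT : T i <;> by_cases hT' : T i'
          · rw [dif_pos hT, dif_pos hT'] at he
            rw [inter_eq_iff] at he
            rw [he.1]
          · exfalso
            rw [dif_pos hT, dif_neg hT', if_pos (hblue_nt i' hy hT')] at he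
            exact iotaP_ne_inter he.symm
          · exfalso
            rw [dif_neg hT, if_pos (hblue_nt i hx hT), dif_pos hT'] at he
            exact iotaP_ne_inter he
          · rw [dif_neg hT, if_pos (hblue_nt i hx hT), dif_neg hT',
              if_pos (hblue_nt i' hy hT')] at he
            have hii : i = i' := iotaP_fst he
            rw [hii]
        · -- pend vs inter
          exfalso
          replace hx : blue i := hx
          replace he : (if h : T i then (.inr (.inr (.inl ⟨i, wit i h, (hwit i h).1⟩)) : Idx G f b) else if ¬ tight i then iotaP i (σ i (.inr ())) else .inr (.inl i)) = pick i' j' hij' := he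
          by_cases hT : T i
          · rw [dif_pos hT] at he
            exact absurd ((hClaimed _).mpr ⟨i, hT, he.symm⟩) (hpickNC i' j' hij')
          · rw [dif_neg hT, if_pos (hblue_nt i hx hT)] at he
            rcases hpickOr i' j' hij' with hp | hp <;> rw [hp] at he <;>
              exact iotaP_ne_inter he
        · -- pend vs p3
          exfalso
          replace hx : blue i := hx
          replace he : (if h : T i then (.inr (.inr (.inl ⟨i, wit i h, (hwit i h).1⟩)) : Idx G f b) else if ¬ tight i then iotaP i (σ i (.inr ())) else .inr (.inl i)) = .inr (.inr (.inr (t', k3 t'))) := he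
          by_cases hT : T i
          · rw [dif_pos hT] at he
            simp at he
          · rw [dif_neg hT, if_pos (hblue_nt i hx hT)] at he
            exact iotaP_ne_p3 he
        · -- inter vs cyc
          exfalso
          replace he : pick i j hij = (if ¬ tight i' then iotaP i' (σ i' (.inl t')) else if T i' then iotaP i' (.inl (t'+1)) else iotaP i' (.inl t')) := he
          rcases hpickOr i j hij with hp | hp <;> rw [hp] at he <;>
            (split_ifs at he <;> exact iotaP_ne_inter he.symm)
        · -- inter vs pend
          exfalso
          replace hy : blue i' := hy
          replace he : pick i j hij = (if h : T i' then (.inr (.inr (.inl ⟨i', wit i' h, (hwit i' h).1⟩)) : Idx G f b) else if ¬ tight i' then iotaP i' (σ i' (.inr ())) else .inr (.inl i')) := he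
          by_cases hT : T i'
          · rw [dif_pos hT] at he
            exact absurd ((hClaimed _).mpr ⟨i', hT, he⟩) (hpickNC i j hij)
          · rw [dif_neg hT, if_pos (hblue_nt i' hy hT)] at he
            rcases hpickOr i j hij with hp | hp <;> rw [hp] at he <;>
              exact iotaP_ne_inter he.symm
        · -- inter vs inter
          replace hx : sel blue i j := hx
          replace hy : sel blue i' j' := hy
          replace he : pick i j hij = pick i' j' hij' := he
          rcases hpickOr i j hij with hp | hp <;> rcases hpickOr i' j' hij' with hp' | hp' <;>
            rw [hp, hp'] at he <;> rw [inter_eq_iff] at he <;> obtain ⟨e1, e2⟩ := he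
          · subst e1; subst e2; rfl
          · exfalso
            subst e1; subst e2
            exact hsel_excl i j hij ⟨hx, hy⟩
          · exfalso
            subst e1; subst e2
            exact hsel_excl i j hij ⟨hx, hy⟩
          · subst e1; subst e2; rfl
        · -- inter vs p3
          exfalso
          replace he : pick i j hij = .inr (.inr (.inr (t', k3 t'))) := he
          rcases hpickOr i j hij with hp | hp <;> rw [hp] at he <;> simp at he
        · -- p3 vs cyc
          exfalso
          replace he : (.inr (.inr (.inr (t, k3 t))) : Idx G f b) = (if ¬ tight i' then iotaP i' (σ i' (.inl t')) else if T i' then iotaP i' (.inl (t'+1)) else iotaP i' (.inl t')) := he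
          split_ifs at he <;> exact iotaP_ne_p3 he.symm
        · -- p3 vs pend
          exfalso
          replace hy : blue i' := hy
          replace he : (.inr (.inr (.inr (t, k3 t))) : Idx G f b) = (if h : T i' then (.inr (.inr (.inl ⟨i', wit i' h, (hwit i' h).1⟩)) : Idx G f b) else if ¬ tight i' then iotaP i' (σ i' (.inr ())) else .inr (.inl i')) := he
          by_cases hT : T i'
          · rw [dif_pos hT] at he
            simp at he
          · rw [dif_neg hT, if_pos (hblue_nt i' hy hT)] at he
            exact iotaP_ne_p3 he.symm
        · -- p3 vs inter
          exfalso
          replace he : (.inr (.inr (.inr (t, k3 t))) : Idx G f b) = pick i' j' hij' := he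
          rcases hpickOr i' j' hij' with hp | hp <;> rw [hp] at he <;> simp at he
        · -- p3 vs p3
          replace hx : k = 1 := hx
          replace hy : k' = 1 := hy
          replace he : (.inr (.inr (.inr (t, k3 t))) : Idx G f b) = .inr (.inr (.inr (t', k3 t'))) := he
          simp only [Sum.inr.injEq, Prod.mk.injEq] at he
          rw [he.1, hx, hy]
    obtain ⟨f0, hmaps, hinj⟩ := hmain
    have himg : f0 '' (canon blue) ⊆ Stmt2Aux.phi gg ⁻¹' S := by
      rintro y ⟨x, hx, rfl⟩; exact hmaps x hx
    calc (Stmt2Aux.phi gg '' canon blue).ncard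
        = (canon blue : Set (Idx G f b)).ncard := Set.ncard_image_of_injective _ φinj
      _ = (f0 '' canon blue).ncard := (Set.ncard_image_of_injOn hinj).symm
      _ ≤ (Stmt2Aux.phi gg ⁻¹' S).ncard := Set.ncard_le_ncard himg (Set.toFinite _)
      _ = (Stmt2Aux.phi gg '' (Stmt2Aux.phi gg ⁻¹' S)).ncard :=
          (Set.ncard_image_of_injective _ φinj).symm
      _ ≤ S.ncard := Set.ncard_le_ncard (Set.image_preimage_subset _ _) (Set.toFinite _)
      _ = K := hK
  · -- inter xor
    intro i j h
    rw [hm_inter i j h, hm_inter j i (G.adj_symm h)]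
    have h1 := hsel_total i j h
    have h2 := hsel_excl i j h
    constructor
    · intro ha hb; exact h2 ⟨ha, hb⟩
    · intro hnb; rcases h1 with h1 | h1
      · exact h1
      · exact absurd h1 hnb
  · -- non-selected side
    intro i j h hns
    rw [hm_inter i j h] at hns
    rw [hm_cyc]
    exact Or.inl ⟨hsel_blue i j hns, gg.β_even i j h⟩
  · -- cycle pieces
    intro i
    by_cases hb : blue i
    · refine Or.inr ⟨fun t => ?_, (hm_pend i).mpr hb⟩
      rw [hm_cyc]
      constructor
      · rintro (⟨_, h⟩ | ⟨h, _⟩)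
        · exact h
        · exact absurd hb h
      · intro h; exact Or.inl ⟨hb, h⟩
    · refine Or.inl ⟨fun t => ?_, fun hc => hb ((hm_pend i).mp hc)⟩
      rw [hm_cyc]
      constructor
      · rintro (⟨h, _⟩ | ⟨_, h⟩)
        · exact absurd h hb
        · exact h
      · intro h; exact Or.inr ⟨hb, h⟩
end

section
/- Let H be a gadget graph for (G, f, b_1, …, b_n) and let k be a natural number. If H has a vertex cover of size at most k + f + m + Σ_{i=1}^n b_i, then G has a vertex cover of size at most k. -/

lemma cycCover_card1 {b : ℕ} (hb : 2 ≤ b) (T : Finset (ZMod (2*b)))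
    (hcov : ∀ t : ZMod (2*b), t ∈ T ∨ t + 1 ∈ T) : b ≤ T.card := by
  haveI : NeZero (2*b) := ⟨by omega⟩
  classical
  set g : Fin b → ZMod (2*b) := fun s =>
    if ((2*s.val : ℕ) : ZMod (2*b)) ∈ T then ((2*s.val : ℕ) : ZMod (2*b))
    else ((2*s.val+1 : ℕ) : ZMod (2*b)) with hg
  have hval : ∀ s : Fin b, (g s).val = 2*s.val ∨ (g s).val = 2*s.val + 1 := by
    intro s
    have h1 : 2*s.val < 2*b := by have := s.isLt; omega
    have h2 : 2*s.val + 1 < 2*b := by have := s.isLt; omega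
    rw [hg]; dsimp only
    split
    · left; exact ZMod.val_cast_of_lt h1
    · right; exact ZMod.val_cast_of_lt h2
  have hmem : ∀ s : Fin b, g s ∈ T := by
    intro s
    rw [hg]; dsimp only
    split
    · assumption
    · rcases hcov ((2*s.val : ℕ) : ZMod (2*b)) with h | h
      · exact absurd h (by assumption)
      · have : ((2*s.val : ℕ) : ZMod (2*b)) + 1 = ((2*s.val+1 : ℕ) : ZMod (2*b)) := by
          push_cast; ring
        rwa [this] at h
  have hginj : Function.Injective g := by
    intro s s' h
    have h1 := hval s; have h2 := hval s'
    have hv : (g s).val = (g s').val := by rw [h]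
    exact Fin.ext (by omega)
  calc b = (Finset.univ : Finset (Fin b)).card := by simp
    _ = (Finset.univ.image g).card := (Finset.card_image_of_injective _ hginj).symm
    _ ≤ T.card := Finset.card_le_card (by
        intro x hx
        simp only [Finset.mem_image] at hx
        obtain ⟨s, _, rfl⟩ := hx
        exact hmem s)

lemma cycCover_card2 {b : ℕ} (hb : 2 ≤ b) (T : Finset (ZMod (2*b)))
    (hcov : ∀ t : ZMod (2*b), t ∈ T ∨ t + 1 ∈ T)
    (x y : ZMod (2*b)) (hx : x ∈ T) (hxe : Even x.val) (hy : y ∈ T) (hyo : Odd y.val) :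
    b + 1 ≤ T.card := by
  haveI : NeZero (2*b) := ⟨by omega⟩
  classical
  by_contra hcon
  push_neg at hcon
  have hcard : T.card = b := le_antisymm (by omega) (cycCover_card1 hb T hcov)
  have hpar : ∀ u v : ZMod (2*b), (u + v).val % 2 = (u.val + v.val) % 2 := by
    intro u v
    rw [ZMod.val_add]
    exact Nat.mod_mod_of_dvd _ ⟨b, rfl⟩
  have hone : (1 : ZMod (2*b)).val = 1 := by
    have h : ((1:ℕ) : ZMod (2*b)) = 1 := by push_cast; ring
    rw [← h]; exact ZMod.val_cast_of_lt (by omega)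
  have htwo : (2 : ZMod (2*b)).val = 2 := by
    have h : ((2:ℕ) : ZMod (2*b)) = 2 := by push_cast; ring
    rw [← h]; exact ZMod.val_cast_of_lt (by omega)
  set g : Fin b → ZMod (2*b) := fun s =>
    if ((2*s.val : ℕ) : ZMod (2*b)) ∈ T then ((2*s.val : ℕ) : ZMod (2*b))
    else ((2*s.val+1 : ℕ) : ZMod (2*b)) with hg
  have hval : ∀ s : Fin b, (g s).val = 2*s.val ∨
      ((g s).val = 2*s.val + 1 ∧ ((2*s.val : ℕ) : ZMod (2*b)) ∉ T) := by
    intro s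
    have h1 : 2*s.val < 2*b := by have := s.isLt; omega
    have h2 : 2*s.val + 1 < 2*b := by have := s.isLt; omega
    rw [hg]; dsimp only
    split
    · left; exact ZMod.val_cast_of_lt h1
    · right; exact ⟨ZMod.val_cast_of_lt h2, by assumption⟩
  have hmem : ∀ s : Fin b, g s ∈ T := by
    intro s
    rw [hg]; dsimp only
    split
    · assumption
    · rcases hcov ((2*s.val : ℕ) : ZMod (2*b)) with h | h
      · exact absurd h (by assumption)
      · have h' : ((2*s.val : ℕ) : ZMod (2*b)) + 1 = ((2*s.val+1 : ℕ) : ZMod (2*b)) := by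
          push_cast; ring
        rwa [h'] at h
  have hginj : Function.Injective g := by
    intro s s' h
    have h1 := hval s; have h2 := hval s'
    have hv : (g s).val = (g s').val := by rw [h]
    exact Fin.ext (by omega)
  have himg : Finset.univ.image g = T := by
    apply Finset.eq_of_subset_of_card_le
    · intro u hu
      simp only [Finset.mem_image] at hu
      obtain ⟨s, _, rfl⟩ := hu
      exact hmem s
    · rw [Finset.card_image_of_injective _ hginj, hcard]; simp
  have hstep1 : ∀ u : ZMod (2*b), Even u.val → u ∈ T → u + 1 ∉ T := by
    intro u hue huT h1mem
    have hmem' : u + 1 ∈ Finset.univ.image g := by rw [himg]; exact h1mem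
    simp only [Finset.mem_image] at hmem'
    obtain ⟨s, _, hs⟩ := hmem'
    have hu1val : (u + 1).val = u.val + 1 := by
      have hlt : u.val < 2*b := u.val_lt
      have hlt' : u.val + 1 < 2*b := by rcases hue with ⟨c, hc⟩; omega
      rw [ZMod.val_add, hone]
      exact Nat.mod_eq_of_lt hlt'
    rcases hval s with h | ⟨h, hnot⟩
    · rw [hs, hu1val] at h
      rcases hue with ⟨c, hc⟩; omega
    · rw [hs, hu1val] at h
      have hsv : 2*s.val = u.val := by omega
      apply hnot
      rw [hsv]
      have h' : ((u.val : ℕ) : ZMod (2*b)) = u := ZMod.natCast_rightInverse u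
      rwa [h']
  have hstep2 : ∀ u : ZMod (2*b), Even u.val → u ∈ T → u + 2 ∈ T := by
    intro u hue huT
    have h1 := hstep1 u hue huT
    rcases hcov (u + 1) with h | h
    · exact absurd h h1
    · have h' : u + 1 + 1 = u + 2 := by ring
      rwa [h'] at h
  have hall : ∀ j : ℕ, x + ((2*j : ℕ) : ZMod (2*b)) ∈ T ∧
      Even ((x + ((2*j : ℕ) : ZMod (2*b))).val) := by
    intro j
    induction j with
    | zero => simpa using ⟨hx, hxe⟩
    | succ j ih =>
      obtain ⟨ihT, ihe⟩ := ih
      have he2 : x + ((2*(j+1) : ℕ) : ZMod (2*b)) = (x + ((2*j : ℕ) : ZMod (2*b))) + 2 := by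
        push_cast; ring
      constructor
      · rw [he2]; exact hstep2 _ ihe ihT
      · rw [he2]
        have hp := hpar (x + ((2*j : ℕ) : ZMod (2*b))) 2
        rw [htwo] at hp
        rcases ihe with ⟨c, hc⟩
        refine Nat.even_iff.mpr ?_
        rw [hp]
        omega
  have hym : Even ((y - 1).val) := by
    have h1 : (y - 1) + 1 = y := by ring
    have hp := hpar (y - 1) 1
    rw [hone, h1] at hp
    rcases hyo with ⟨c, hc⟩
    rw [Nat.even_iff]
    omega
  have hd : Even ((y - 1 - x).val) := by
    have h1 : x + (y - 1 - x) = y - 1 := by ring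
    have hp := hpar x (y - 1 - x)
    rw [h1] at hp
    rcases hxe with ⟨c, hc⟩
    rcases hym with ⟨d, hdd⟩
    rw [Nat.even_iff]
    omega
  obtain ⟨j, hj⟩ := hd
  have hyx : x + ((2*j : ℕ) : ZMod (2*b)) = y - 1 := by
    have h' : (2*j : ℕ) = (y - 1 - x).val := by omega
    rw [h', ZMod.natCast_rightInverse (y - 1 - x)]
    ring
  have hy1T : y - 1 ∈ T := by rw [← hyx]; exact (hall j).1
  have hlast := hstep1 (y - 1) hym hy1T
  rw [sub_add_cancel] at hlast
  exact hlast hy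

def gadgetMap {n : ℕ} {G : SimpleGraph (Fin n)} {f : ℕ} {b : Fin n → ℕ}
    {W : Type*} {H : SimpleGraph W} (gg : GadgetGraph G f b H) :
    ((Σ i : Fin n, ZMod (2 * b i)) ⊕ (Fin n) ⊕
      (Σ' (i : Fin n) (j : Fin n), G.Adj i j) ⊕ (Fin f × Fin 3)) → W :=
  fun x => match x with
  | .inl ⟨i, t⟩ => gg.cyc i t
  | .inr (.inl i) => gg.pend i
  | .inr (.inr (.inl ⟨i, j, h⟩)) => gg.inter i j h
  | .inr (.inr (.inr (t, k))) => gg.p3 t k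

lemma gadgetMap_bijective {n : ℕ} {G : SimpleGraph (Fin n)} {f : ℕ} {b : Fin n → ℕ}
    {W : Type*} {H : SimpleGraph W} (gg : GadgetGraph G f b H) :
    Function.Bijective (gadgetMap gg) := by
  have h := gg.pieces_bij
  have he : gadgetMap gg = (fun x => match x with
      | .inl ⟨i, t⟩ => gg.cyc i t
      | .inr (.inl i) => gg.pend i
      | .inr (.inr (.inl ⟨i, j, h⟩)) => gg.inter i j h
      | .inr (.inr (.inr (t, k))) => gg.p3 t k) := by
    funext x
    rcases x with ⟨i, t⟩ | i | ⟨i, j, hij⟩ | ⟨t, k⟩ <;> rfl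
  rw [he]
  exact h

lemma psigma_eq_iff {n : ℕ} {G : SimpleGraph (Fin n)} {a₁ a₂ c₁ c₂ : Fin n}
    {h : G.Adj a₁ a₂} {h' : G.Adj c₁ c₂}
    (heq : (⟨a₁, a₂, h⟩ : Σ' (i : Fin n) (j : Fin n), G.Adj i j) = ⟨c₁, c₂, h'⟩) :
    a₁ = c₁ ∧ a₂ = c₂ := by
  cases heq; exact ⟨rfl, rfl⟩

lemma psigma_ext {n : ℕ} {G : SimpleGraph (Fin n)} {a₁ a₂ c₁ c₂ : Fin n}
    (h : G.Adj a₁ a₂) (h' : G.Adj c₁ c₂) (e1 : a₁ = c₁) (e2 : a₂ = c₂) :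
    (⟨a₁, a₂, h⟩ : Σ' (i : Fin n) (j : Fin n), G.Adj i j) = ⟨c₁, c₂, h'⟩ := by
  subst e1; subst e2; rfl

open Classical in
noncomputable def phiAux {n : ℕ} {G : SimpleGraph (Fin n)} {f : ℕ} {b : Fin n → ℕ}
    {W : Type*} {H : SimpleGraph W} (gg : GadgetGraph G f b H) (S : Set W) :
    ((Σ i : Fin n, ZMod (2 * b i)) ⊕ (Fin n ⊕
      (((Σ' (i : Fin n) (j : Fin n), G.Adj i j) ⊕ (Σ' (i : Fin n) (j : Fin n), G.Adj i j)) ⊕ Fin f))) →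
    ((Σ i : Fin n, ZMod (2 * b i)) ⊕ (Fin n) ⊕
      (Σ' (i : Fin n) (j : Fin n), G.Adj i j) ⊕ (Fin f × Fin 3)) :=
  fun x => match x with
  | .inl ⟨i, t⟩ => .inl ⟨i, t⟩
  | .inr (.inl i) => .inr (.inl i)
  | .inr (.inr (.inl (.inl ⟨i, j, h⟩))) =>
      if gg.inter i j h ∈ S then .inr (.inr (.inl ⟨i, j, h⟩))
      else .inr (.inr (.inl ⟨j, i, G.adj_symm h⟩))
  | .inr (.inr (.inl (.inr ⟨i, j, h⟩))) => .inr (.inr (.inl ⟨j, i, G.adj_symm h⟩))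
  | .inr (.inr (.inr t)) => .inr (.inr (.inr (t, if gg.p3 t 0 ∈ S then 0 else 1)))

/-- If a gadget graph `H` for `(G, f, b)` has a vertex cover of size
at most `k + f + m + ∑ i, b i`, then `G` has a vertex cover of size at most `k`. -/
theorem stmt3 {n : ℕ} (G : SimpleGraph (Fin n)) [DecidableRel G.Adj]
    (f : ℕ) (b : Fin n → ℕ) {W : Type*} (H : SimpleGraph W)
    (hniso : ∀ i : Fin n, ∃ j, G.Adj i j)
    (hb2 : ∀ i, 2 ≤ b i)
    (hbdeg : ∀ i, b i = G.degree i ∨ b i = G.degree i + 1 ∨ b i = G.degree i + 2)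
    (gg : GadgetGraph G f b H)
    (k : ℕ)
    (hex : ∃ S : Set W, IsVertexCover H S ∧
      S.ncard ≤ k + f + G.edgeFinset.card + ∑ i, b i) :
    ∃ C : Set (Fin n), IsVertexCover G C ∧ C.ncard ≤ k := by
  classical
  obtain ⟨S, hScov, hScard⟩ := hex
  haveI hnz : ∀ i : Fin n, NeZero (2 * b i) := fun i => ⟨by have := hb2 i; omega⟩
  -- adjacency facts in H
  have adjCyc : ∀ i t, H.Adj (gg.cyc i t) (gg.cyc i (t+1)) := fun i t =>
    (gg.adj_iff _ _).2 (Or.inl ⟨i, t, Or.inl ⟨rfl, rfl⟩⟩)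
  have adjPend : ∀ i, H.Adj (gg.pend i) (gg.cyc i (gg.ρ i)) := fun i =>
    (gg.adj_iff _ _).2 (Or.inr (Or.inl ⟨i, Or.inl ⟨rfl, rfl⟩⟩))
  have adjBlue : ∀ i j (h : G.Adj i j), H.Adj (gg.cyc i (gg.β i j h)) (gg.inter i j h) :=
    fun i j h => (gg.adj_iff _ _).2 (Or.inr (Or.inr (Or.inl ⟨i, j, h, Or.inl ⟨rfl, rfl⟩⟩)))
  have adjMid : ∀ i j (h : G.Adj i j), H.Adj (gg.inter i j h) (gg.inter j i (G.adj_symm h)) :=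
    fun i j h => (gg.adj_iff _ _).2 (Or.inr (Or.inr (Or.inr (Or.inl ⟨i, j, h, rfl, rfl⟩))))
  have adjP3 : ∀ t, H.Adj (gg.p3 t 0) (gg.p3 t 1) := fun t =>
    (gg.adj_iff _ _).2 (Or.inr (Or.inr (Or.inr (Or.inr ⟨t, Or.inl ⟨rfl, rfl⟩⟩))))
  -- cycle-occupancy sets
  set T : (i : Fin n) → Finset (ZMod (2 * b i)) :=
    fun i => Finset.univ.filter (fun t => gg.cyc i t ∈ S) with hTdef
  have hTmem : ∀ i t, t ∈ T i ↔ gg.cyc i t ∈ S := by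
    intro i t; simp [hTdef]
  have hTcov : ∀ i (t : ZMod (2 * b i)), t ∈ T i ∨ t + 1 ∈ T i := by
    intro i t
    rcases hScov (adjCyc i t) with h | h
    · exact Or.inl ((hTmem i t).2 h)
    · exact Or.inr ((hTmem i _).2 h)
  have hTb : ∀ i, b i ≤ (T i).card := fun i => cycCover_card1 (hb2 i) (T i) (hTcov i)
  set C : Finset (Fin n) := Finset.univ.filter
      (fun i => gg.pend i ∈ S ∨ ∃ t : ZMod (2 * b i), Even t.val ∧ gg.cyc i t ∈ S) with hCdef
  set Cpend : Finset (Fin n) := Finset.univ.filter (fun i => gg.pend i ∈ S) with hCpdef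
  have key1 : ∀ i, b i + (if i ∈ C then 1 else 0) ≤ (T i).card + (if i ∈ Cpend then 1 else 0) := by
    intro i
    by_cases hC : i ∈ C
    · rw [if_pos hC]
      rw [hCdef, Finset.mem_filter] at hC
      by_cases hpend : gg.pend i ∈ S
      · rw [if_pos (by rw [hCpdef, Finset.mem_filter]; exact ⟨Finset.mem_univ _, hpend⟩)]
        exact Nat.add_le_add_right (hTb i) 1
      · rcases hC.2 with h | ⟨t, hte, htS⟩
        · exact absurd h hpend
        have hρ : gg.cyc i (gg.ρ i) ∈ S := by
          rcases hScov (adjPend i) with h | h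
          · exact absurd h hpend
          · exact h
        have hkey := cycCover_card2 (hb2 i) (T i) (hTcov i) t (gg.ρ i)
          ((hTmem i t).2 htS) hte ((hTmem i _).2 hρ) (gg.ρ_odd i)
        have hz : (if i ∈ Cpend then 1 else 0) = 0 := by
          rw [if_neg]
          rw [hCpdef, Finset.mem_filter]
          tauto
        omega
    · rw [if_neg hC]
      exact le_trans (hTb i) (Nat.le_add_right _ _)
  -- the ordered edge sets
  set Poff : Finset (Σ' (i : Fin n) (j : Fin n), G.Adj i j) :=
    Finset.univ.filter (fun q => q.1 < q.2.1) with hPoffdef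
  set Dset : Finset (Σ' (i : Fin n) (j : Fin n), G.Adj i j) :=
    Poff.filter (fun q => gg.inter q.1 q.2.1 q.2.2 ∈ S ∧
      gg.inter q.2.1 q.1 (G.adj_symm q.2.2) ∈ S) with hDdef
  have hPoffmem : ∀ p1 p2 (hp : G.Adj p1 p2),
      (⟨p1, p2, hp⟩ : Σ' (i : Fin n) (j : Fin n), G.Adj i j) ∈ Poff ↔ p1 < p2 := by
    intro p1 p2 hp; simp [hPoffdef]
  have hDmem : ∀ p1 p2 (hp : G.Adj p1 p2),
      (⟨p1, p2, hp⟩ : Σ' (i : Fin n) (j : Fin n), G.Adj i j) ∈ Dset ↔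
        (p1 < p2 ∧ gg.inter p1 p2 hp ∈ S ∧ gg.inter p2 p1 (G.adj_symm hp) ∈ S) := by
    intro p1 p2 hp; simp [hDdef, hPoffdef, and_assoc]
  have hPoffcard : Poff.card = G.edgeFinset.card := by
    apply Finset.card_bij (fun q _ => s(q.1, q.2.1))
    · intro q hq
      rw [SimpleGraph.mem_edgeFinset, SimpleGraph.mem_edgeSet]
      exact q.2.2
    · rintro ⟨p1, p2, hp⟩ h1 ⟨q1, q2, hq⟩ h2 heq
      rw [hPoffmem] at h1 h2
      simp only [Sym2.eq_iff] at heq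
      rcases heq with ⟨e1, e2⟩ | ⟨e1, e2⟩
      · exact psigma_ext hp hq e1 e2
      · exfalso
        have : p1 < q2 := lt_trans (lt_of_lt_of_eq h1 e2) h2
        rw [← e1] at this
        exact lt_irrefl _ this
    · intro e he
      revert he
      induction e using Sym2.ind with
      | _ a c =>
        intro he
        have hadj : G.Adj a c := by
          rwa [SimpleGraph.mem_edgeFinset, SimpleGraph.mem_edgeSet] at he
        rcases lt_or_gt_of_ne (G.ne_of_adj hadj) with h | h
        · exact ⟨⟨a, c, hadj⟩, (hPoffmem a c hadj).2 h, rfl⟩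
        · exact ⟨⟨c, a, G.adj_symm hadj⟩, (hPoffmem c a (G.adj_symm hadj)).2 h, Sym2.eq_swap⟩
  -- pull back the cover along the bijection
  have hbij := gadgetMap_bijective gg
  have hfin : (gadgetMap gg ⁻¹' S).Finite := Set.toFinite _
  set F : Finset _ := hfin.toFinset with hFdef
  have hncard : S.ncard = F.card := by
    have h1 : gadgetMap gg '' (gadgetMap gg ⁻¹' S) = S :=
      Set.image_preimage_eq S hbij.surjective
    rw [← h1, Set.ncard_image_of_injective _ hbij.injective, hFdef]
    exact Set.ncard_eq_toFinset_card _ hfin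
  have hFmem : ∀ z, z ∈ F ↔ gadgetMap gg z ∈ S := by
    intro z; rw [hFdef, Set.Finite.mem_toFinset]; rfl
  set J := (Finset.univ.sigma T).disjSum (Cpend.disjSum
      ((Poff.disjSum Dset).disjSum (Finset.univ : Finset (Fin f)))) with hJdef
  have hJF : ∀ x ∈ J, phiAux gg S x ∈ F := by
    intro x hx
    rcases x with ⟨i, t⟩ | i | (⟨p1, p2, hp⟩ | ⟨p1, p2, hp⟩) | t
    · rw [hJdef, Finset.inl_mem_disjSum, Finset.mem_sigma] at hx
      rw [hFmem]
      exact (hTmem i t).1 hx.2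
    · rw [hJdef, Finset.inr_mem_disjSum, Finset.inl_mem_disjSum, hCpdef,
        Finset.mem_filter] at hx
      rw [hFmem]
      exact hx.2
    · rw [hJdef, Finset.inr_mem_disjSum, Finset.inr_mem_disjSum, Finset.inl_mem_disjSum,
        Finset.inl_mem_disjSum] at hx
      rw [hFmem]
      simp only [phiAux]
      split_ifs with hin
      · simpa only [gadgetMap] using hin
      · rcases hScov (adjMid p1 p2 hp) with h | h
        · exact absurd h hin
        · simpa only [gadgetMap] using h
    · rw [hJdef, Finset.inr_mem_disjSum, Finset.inr_mem_disjSum, Finset.inl_mem_disjSum,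
        Finset.inr_mem_disjSum, hDmem] at hx
      rw [hFmem]
      simp only [phiAux]
      simpa only [gadgetMap] using hx.2.2
    · rw [hFmem]
      simp only [phiAux]
      split_ifs with h0
      · simpa only [gadgetMap] using h0
      · rcases hScov (adjP3 t) with h | h
        · exact absurd h h0
        · simpa only [gadgetMap] using h
  have hinjJ : Set.InjOn (phiAux gg S) ↑J := by
    intro x hx y hy hxy
    rcases x with ⟨i, t⟩ | i | (⟨p1, p2, hp⟩ | ⟨p1, p2, hp⟩) | t <;>
      rcases y with ⟨i', t'⟩ | i' | (⟨q1, q2, hq⟩ | ⟨q1, q2, hq⟩) | t' <;>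
      simp only [phiAux] at hxy
    -- (1,*)
    · exact congrArg Sum.inl (Sum.inl.inj hxy)
    · simp at hxy
    · split_ifs at hxy <;> simp at hxy
    · simp at hxy
    · simp at hxy
    -- (2,*)
    · simp at hxy
    · have h := Sum.inl.inj (Sum.inr.inj hxy)
      rw [h]
    · split_ifs at hxy <;> simp at hxy
    · simp at hxy
    · simp at hxy
    -- (3,*)  x = Poff part
    · split_ifs at hxy <;> simp at hxy
    · split_ifs at hxy <;> simp at hxy
    · -- (3,3)
      have hx' : p1 < p2 := by
        rw [Finset.mem_coe, hJdef, Finset.inr_mem_disjSum, Finset.inr_mem_disjSum,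
          Finset.inl_mem_disjSum, Finset.inl_mem_disjSum, hPoffmem] at hx
        exact hx
      have hy' : q1 < q2 := by
        rw [Finset.mem_coe, hJdef, Finset.inr_mem_disjSum, Finset.inr_mem_disjSum,
          Finset.inl_mem_disjSum, Finset.inl_mem_disjSum, hPoffmem] at hy
        exact hy
      split_ifs at hxy
      · obtain ⟨e1, e2⟩ := psigma_eq_iff (Sum.inl.inj (Sum.inr.inj (Sum.inr.inj hxy)))
        exact congrArg (fun z => Sum.inr (Sum.inr (Sum.inl (Sum.inl z))))
          (psigma_ext hp hq e1 e2)
      · obtain ⟨e1, e2⟩ := psigma_eq_iff (Sum.inl.inj (Sum.inr.inj (Sum.inr.inj hxy)))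
        exfalso
        have hlt : p1 < q2 := lt_trans (lt_of_lt_of_eq hx' e2) hy'
        rw [← e1] at hlt
        exact lt_irrefl _ hlt
      · obtain ⟨e1, e2⟩ := psigma_eq_iff (Sum.inl.inj (Sum.inr.inj (Sum.inr.inj hxy)))
        exfalso
        have hlt : p1 < q2 := lt_trans (lt_of_lt_of_eq hx' e1) hy'
        rw [← e2] at hlt
        exact lt_irrefl _ hlt
      · obtain ⟨e1, e2⟩ := psigma_eq_iff (Sum.inl.inj (Sum.inr.inj (Sum.inr.inj hxy)))
        exact congrArg (fun z => Sum.inr (Sum.inr (Sum.inl (Sum.inl z))))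
          (psigma_ext hp hq e2 e1)
    · -- (3,4) x Poff part, y Dset part
      have hx' : p1 < p2 := by
        rw [Finset.mem_coe, hJdef, Finset.inr_mem_disjSum, Finset.inr_mem_disjSum,
          Finset.inl_mem_disjSum, Finset.inl_mem_disjSum, hPoffmem] at hx
        exact hx
      have hy' : q1 < q2 ∧ gg.inter q1 q2 hq ∈ S ∧ gg.inter q2 q1 (G.adj_symm hq) ∈ S := by
        rw [Finset.mem_coe, hJdef, Finset.inr_mem_disjSum, Finset.inr_mem_disjSum,
          Finset.inl_mem_disjSum, Finset.inr_mem_disjSum, hDmem] at hy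
        exact hy
      split_ifs at hxy with h1
      · obtain ⟨e1, e2⟩ := psigma_eq_iff (Sum.inl.inj (Sum.inr.inj (Sum.inr.inj hxy)))
        exfalso
        have hlt : p1 < q2 := lt_trans (lt_of_lt_of_eq hx' e2) hy'.1
        rw [← e1] at hlt
        exact lt_irrefl _ hlt
      · obtain ⟨e1, e2⟩ := psigma_eq_iff (Sum.inl.inj (Sum.inr.inj (Sum.inr.inj hxy)))
        exfalso
        subst e1
        subst e2
        exact h1 hy'.2.1
    · split_ifs at hxy <;> simp at hxy
    -- (4,*)  x = Dset part
    · simp at hxy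
    · simp at hxy
    · -- (4,3)
      have hx' : p1 < p2 ∧ gg.inter p1 p2 hp ∈ S ∧ gg.inter p2 p1 (G.adj_symm hp) ∈ S := by
        rw [Finset.mem_coe, hJdef, Finset.inr_mem_disjSum, Finset.inr_mem_disjSum,
          Finset.inl_mem_disjSum, Finset.inr_mem_disjSum, hDmem] at hx
        exact hx
      have hy' : q1 < q2 := by
        rw [Finset.mem_coe, hJdef, Finset.inr_mem_disjSum, Finset.inr_mem_disjSum,
          Finset.inl_mem_disjSum, Finset.inl_mem_disjSum, hPoffmem] at hy
        exact hy
      split_ifs at hxy with h1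
      · obtain ⟨e1, e2⟩ := psigma_eq_iff (Sum.inl.inj (Sum.inr.inj (Sum.inr.inj hxy)))
        exfalso
        have hlt : p1 < q2 := lt_trans (lt_of_lt_of_eq hx'.1 e1) hy'
        rw [← e2] at hlt
        exact lt_irrefl _ hlt
      · obtain ⟨e1, e2⟩ := psigma_eq_iff (Sum.inl.inj (Sum.inr.inj (Sum.inr.inj hxy)))
        exfalso
        subst e1
        subst e2
        exact h1 hx'.2.1
    · -- (4,4)
      obtain ⟨e1, e2⟩ := psigma_eq_iff (Sum.inl.inj (Sum.inr.inj (Sum.inr.inj hxy)))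
      exact congrArg (fun z => Sum.inr (Sum.inr (Sum.inl (Sum.inr z))))
        (psigma_ext hp hq e2 e1)
    · simp at hxy
    -- (5,*)
    · simp at hxy
    · simp at hxy
    · split_ifs at hxy <;> simp at hxy
    · simp at hxy
    · have h := Sum.inr.inj (Sum.inr.inj (Sum.inr.inj hxy))
      have ht : t = t' := congrArg Prod.fst h
      rw [ht]
  -- counting
  have hJle : J.card ≤ F.card := Finset.card_le_card_of_injOn _ hJF hinjJ
  have hJcard : J.card = (∑ i, (T i).card) + (Cpend.card + ((Poff.card + Dset.card) +
      (Finset.univ : Finset (Fin f)).card)) := by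
    rw [hJdef, Finset.card_disjSum, Finset.card_disjSum, Finset.card_disjSum,
      Finset.card_disjSum, Finset.card_sigma]
  have hfcard : (Finset.univ : Finset (Fin f)).card = f := by simp
  have hsum : (∑ i, b i) + C.card ≤ (∑ i, (T i).card) + Cpend.card := by
    have h1 : ∑ i, (b i + (if i ∈ C then 1 else 0)) ≤
        ∑ i, ((T i).card + (if i ∈ Cpend then 1 else 0)) :=
      Finset.sum_le_sum (fun i _ => key1 i)
    rw [Finset.sum_add_distrib, Finset.sum_add_distrib] at h1
    have h2 : ∑ i, (if i ∈ C then (1:ℕ) else 0) = C.card := by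
      rw [← Finset.card_filter, Finset.filter_mem_eq_inter, Finset.univ_inter]
    have h3 : ∑ i, (if i ∈ Cpend then (1:ℕ) else 0) = Cpend.card := by
      rw [← Finset.card_filter, Finset.filter_mem_eq_inter, Finset.univ_inter]
    omega
  have hmain : C.card + Dset.card ≤ k := by
    rw [hncard] at hScard
    omega
  -- the vertex cover of G
  refine ⟨↑(C ∪ Dset.image (fun q => q.1)), ?_, ?_⟩
  · intro x y hxy
    simp only [Finset.coe_union, Set.mem_union, Finset.mem_coe, Finset.coe_image,
      Set.mem_image]
    by_cases hxC : x ∈ C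
    · exact Or.inl (Or.inl hxC)
    by_cases hyC : y ∈ C
    · exact Or.inr (Or.inl hyC)
    have hblue : ∀ u v (huv : G.Adj u v), u ∉ C → gg.inter u v huv ∈ S := by
      intro u v huv huC
      have hbu : gg.cyc u (gg.β u v huv) ∉ S := by
        intro hmem
        apply huC
        rw [hCdef, Finset.mem_filter]
        exact ⟨Finset.mem_univ _, Or.inr ⟨gg.β u v huv, gg.β_even u v huv, hmem⟩⟩
      rcases hScov (adjBlue u v huv) with h | h
      · exact absurd h hbu
      · exact h
    have hix : gg.inter x y hxy ∈ S := hblue x y hxy hxC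
    have hiy : gg.inter y x (G.adj_symm hxy) ∈ S := hblue y x (G.adj_symm hxy) hyC
    rcases lt_trichotomy x y with h | h | h
    · refine Or.inl (Or.inr ⟨⟨x, y, hxy⟩, ?_, rfl⟩)
      rw [hDmem]
      exact ⟨h, hix, hiy⟩
    · exact absurd h (G.ne_of_adj hxy)
    · refine Or.inr (Or.inr ⟨⟨y, x, G.adj_symm hxy⟩, ?_, rfl⟩)
      rw [hDmem]
      exact ⟨h, hiy, hix⟩
  · rw [Set.ncard_coe_finset]
    calc (C ∪ Dset.image (fun q => q.1)).card
        ≤ C.card + (Dset.image (fun q => q.1)).card := Finset.card_union_le _ _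
      _ ≤ C.card + Dset.card := Nat.add_le_add_left Finset.card_image_le _
      _ ≤ k := hmain
end

section
/- Let H be a gadget graph for (G, f, b_1, …, b_n) and let k be a natural number. Then G has a vertex cover of size at most k if and only if H has a vertex cover of size at most k + f + m + Σ_{i=1}^n b_i. -/
section zmodlem
variable {b : ℕ} [NeZero b]

private def par : ZMod (2*b) →+* ZMod 2 :=
  ZMod.castHom (⟨b, rfl⟩ : 2 ∣ 2*b) (ZMod 2)

instance : NeZero (2*b) := ⟨by have := NeZero.ne b; omega⟩

lemma par_eq_zero_iff (z : ZMod (2*b)) :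
    par z = 0 ↔ Even z.val := by
  rw [par, ZMod.castHom_apply, ← ZMod.natCast_val,
    ZMod.natCast_eq_zero_iff]
  exact ⟨fun h => (even_iff_two_dvd).2 h, fun h => (even_iff_two_dvd).1 h⟩

lemma even_val_add_one_iff (z : ZMod (2*b)) :
    Even ((z+1).val) ↔ ¬ Even z.val := by
  rw [← par_eq_zero_iff, ← par_eq_zero_iff, map_add, map_one]
  have : ∀ u : ZMod 2, u + 1 = 0 ↔ ¬ (u = 0) := by decide
  exact this _

open Finset in
lemma card_even_filter :
    (Finset.univ.filter (fun t : ZMod (2*b) => Even t.val)).card = b ∧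
    (Finset.univ.filter (fun t : ZMod (2*b) => ¬ Even t.val)).card = b := by
  have hsum : (Finset.univ.filter (fun t : ZMod (2*b) => Even t.val)).card
      + (Finset.univ.filter (fun t : ZMod (2*b) => ¬ Even t.val)).card = 2*b := by
    rw [Finset.card_filter_add_card_filter_not, Finset.card_univ, ZMod.card]
  have hbij : (Finset.univ.filter (fun t : ZMod (2*b) => Even t.val)).card =
      (Finset.univ.filter (fun t : ZMod (2*b) => ¬ Even t.val)).card := by
    apply Finset.card_nbij' (i := fun t => t + 1) (j := fun t => t - 1)
    · intro a ha
      simp only [Finset.mem_coe, Finset.mem_filter, Finset.mem_univ, true_and] at ha ⊢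
      rw [even_val_add_one_iff]; exact fun h => h ha
    · intro a ha
      simp only [Finset.mem_coe, Finset.mem_filter, Finset.mem_univ, true_and] at ha ⊢
      have := even_val_add_one_iff (b := b) (a - 1)
      rw [sub_add_cancel] at this
      by_contra hcon
      exact ha (this.mpr hcon)
    · intro a _; ring
    · intro a _; ring
  omega


lemma cyc_cover_lb (T : Finset (ZMod (2*b))) (h : ∀ t, t ∈ T ∨ t + 1 ∈ T) :
    b ≤ T.card := by
  have hmap : ∀ a ∈ Tᶜ, a + 1 ∈ T := fun a ha =>
    (h a).resolve_left (by simpa using ha)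
  have hinj : Set.InjOn (fun a : ZMod (2*b) => a + 1) ↑(Tᶜ) := fun x _ y _ hxy => by
    simpa using hxy
  have h1 := Finset.card_le_card_of_injOn _ hmap hinj
  have hc : Tᶜ.card + T.card = 2*b := by
    rw [Finset.card_compl, ZMod.card]; have := Finset.card_le_univ T
    rw [ZMod.card] at this; omega
  omega

lemma cyc_cover_exact (T : Finset (ZMod (2*b))) (h : ∀ t, t ∈ T ∨ t + 1 ∈ T)
    (hcard : T.card ≤ b) : ∀ x, x + 1 ∈ T ↔ x ∉ T := by
  have hlb := cyc_cover_lb T h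
  have hcc : Tᶜ.card + T.card = 2*b := by
    rw [Finset.card_compl, ZMod.card]; have := Finset.card_le_univ T
    rw [ZMod.card] at this; omega
  have hsurj := Finset.surj_on_of_inj_on_of_card_le
    (s := Tᶜ) (t := T) (fun a _ => a + 1)
    (fun a ha => (h a).resolve_left (by simpa using ha))
    (fun a₁ a₂ _ _ he => by simpa using he)
    (by omega)
  intro x
  constructor
  · intro hx1 hx
    obtain ⟨a, ha, hax⟩ := hsurj _ hx1
    have : a = x := by
      have : a + 1 = x + 1 := hax.symm
      simpa using this
    rw [this] at ha
    exact (Finset.mem_compl.mp ha) hx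
  · intro hx
    exact (h x).resolve_left hx

lemma cyc_cover_struct (T : Finset (ZMod (2*b))) (h : ∀ t, t ∈ T ∨ t + 1 ∈ T)
    (hcard : T.card ≤ b) {r : ZMod (2*b)} (hr : r ∈ T) (hrodd : ¬ Even r.val)
    {x : ZMod (2*b)} (hx : Even x.val) : x ∉ T := by
  have key := cyc_cover_exact T h hcard
  have notnext : ∀ y, y ∈ T → y + 1 ∉ T := fun y hy hy1 => (key y).1 hy1 hy
  have step : ∀ m : ℕ, r + 2*(m : ZMod (2*b)) ∈ T ∧ r + 2*(m : ZMod (2*b)) + 1 ∉ T := by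
    intro m; induction m with
    | zero =>
      refine ⟨by simpa using hr, ?_⟩
      simpa using notnext r hr
    | succ m ih =>
      have h1 : r + 2*((m:ℕ) : ZMod (2*b)) + 1 + 1 ∈ T := (key _).2 ih.2
      have h2 : r + 2*((m:ℕ) : ZMod (2*b)) + 1 + 1 + 1 ∉ T := notnext _ h1
      constructor
      · have he : r + 2*(((m+1:ℕ)) : ZMod (2*b)) = r + 2*((m:ℕ) : ZMod (2*b)) + 1 + 1 := by
          push_cast; ring
        rw [he]; exact h1
      · have he : r + 2*(((m+1:ℕ)) : ZMod (2*b)) + 1 = r + 2*((m:ℕ) : ZMod (2*b)) + 1 + 1 + 1 := by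
          push_cast; ring
        rw [he]; exact h2
  have hdpar : ¬ Even ((x - r).val) := by
    rw [← par_eq_zero_iff] at hx hrodd ⊢
    rw [map_sub]
    have : ∀ u v : ZMod 2, u = 0 → ¬(v = 0) → ¬(u - v = 0) := by decide
    exact this _ _ hx hrodd
  obtain ⟨m, hm⟩ := Nat.not_even_iff_odd.mp hdpar
  have hxeq : x = r + 2*((m:ℕ) : ZMod (2*b)) + 1 := by
    have h0 : (((x - r).val : ℕ) : ZMod (2*b)) = x - r := by
      rw [ZMod.natCast_val, ZMod.cast_id]
    rw [hm] at h0
    push_cast at h0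
    linear_combination -h0
  rw [hxeq]
  exact (step m).2

end zmodlem

namespace GadgetGraph
variable {n : ℕ} {G : SimpleGraph (Fin n)} {f : ℕ} {b : Fin n → ℕ} {W : Type*}
  {H : SimpleGraph W} (gg : GadgetGraph G f b H)

lemma cyc_injOn {p q : Σ i : Fin n, ZMod (2 * b i)}
    (h : gg.cyc p.1 p.2 = gg.cyc q.1 q.2) : p = q := by
  obtain ⟨i, t⟩ := p; obtain ⟨i', t'⟩ := q
  exact Sum.inl.inj (gg.pieces_bij.injective
    (a₁ := Sum.inl ⟨i, t⟩) (a₂ := Sum.inl ⟨i', t'⟩) h)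

lemma cyc_inj {i : Fin n} {t t' : ZMod (2 * b i)}
    (h : gg.cyc i t = gg.cyc i t') : t = t' := by
  have h2 := gg.cyc_injOn (p := ⟨i, t⟩) (q := ⟨i, t'⟩) h
  simpa using h2

lemma pend_inj {i i' : Fin n} (h : gg.pend i = gg.pend i') : i = i' := by
  have := gg.pieces_bij.injective
    (a₁ := Sum.inr (Sum.inl i)) (a₂ := Sum.inr (Sum.inl i')) h
  simpa using this

lemma inter_inj {i j i' j' : Fin n} {h : G.Adj i j} {h' : G.Adj i' j'}
    (he : gg.inter i j h = gg.inter i' j' h') : i = i' ∧ j = j' := by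
  have := gg.pieces_bij.injective
    (a₁ := Sum.inr (Sum.inr (Sum.inl ⟨i, j, h⟩)))
    (a₂ := Sum.inr (Sum.inr (Sum.inl ⟨i', j', h'⟩))) he
  simp only [Sum.inr.injEq, Sum.inl.injEq] at this
  injection this with h1 h2
  subst h1
  rw [heq_iff_eq] at h2
  injection h2 with h3 h4
  exact ⟨rfl, h3⟩

lemma p3_inj {t t' : Fin f} {a a' : Fin 3} (h : gg.p3 t a = gg.p3 t' a') :
    t = t' ∧ a = a' := by
  have := gg.pieces_bij.injective
    (a₁ := Sum.inr (Sum.inr (Sum.inr (t, a))))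
    (a₂ := Sum.inr (Sum.inr (Sum.inr (t', a')))) h
  simpa using this

lemma cyc_ne_pend {i i' : Fin n} {t : ZMod (2 * b i)} :
    gg.cyc i t ≠ gg.pend i' := fun h => by
  have := gg.pieces_bij.injective
    (a₁ := Sum.inl ⟨i, t⟩) (a₂ := Sum.inr (Sum.inl i')) h
  simp at this

lemma cyc_ne_inter {i i' j' : Fin n} {t : ZMod (2 * b i)} {h' : G.Adj i' j'} :
    gg.cyc i t ≠ gg.inter i' j' h' := fun h => by
  have := gg.pieces_bij.injective
    (a₁ := Sum.inl ⟨i, t⟩) (a₂ := Sum.inr (Sum.inr (Sum.inl ⟨i', j', h'⟩))) h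
  simp at this

lemma cyc_ne_p3 {i : Fin n} {t : ZMod (2 * b i)} {s : Fin f} {a : Fin 3} :
    gg.cyc i t ≠ gg.p3 s a := fun h => by
  have := gg.pieces_bij.injective
    (a₁ := Sum.inl ⟨i, t⟩) (a₂ := Sum.inr (Sum.inr (Sum.inr (s, a)))) h
  simp at this

lemma pend_ne_inter {i i' j' : Fin n} {h' : G.Adj i' j'} :
    gg.pend i ≠ gg.inter i' j' h' := fun h => by
  have := gg.pieces_bij.injective
    (a₁ := Sum.inr (Sum.inl i)) (a₂ := Sum.inr (Sum.inr (Sum.inl ⟨i', j', h'⟩))) h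
  simp at this

lemma pend_ne_p3 {i : Fin n} {s : Fin f} {a : Fin 3} :
    gg.pend i ≠ gg.p3 s a := fun h => by
  have := gg.pieces_bij.injective
    (a₁ := Sum.inr (Sum.inl i)) (a₂ := Sum.inr (Sum.inr (Sum.inr (s, a)))) h
  simp at this

lemma inter_ne_p3 {i j : Fin n} {h : G.Adj i j} {s : Fin f} {a : Fin 3} :
    gg.inter i j h ≠ gg.p3 s a := fun he => by
  have := gg.pieces_bij.injective
    (a₁ := Sum.inr (Sum.inr (Sum.inl ⟨i, j, h⟩)))
    (a₂ := Sum.inr (Sum.inr (Sum.inr (s, a)))) he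
  simp at this

end GadgetGraph

lemma forward_dir {n : ℕ} (G : SimpleGraph (Fin n)) [DecidableRel G.Adj]
    (f : ℕ) (b : Fin n → ℕ) {W : Type*} (H : SimpleGraph W)
    (hb2 : ∀ i, 2 ≤ b i) (gg : GadgetGraph G f b H) (k : ℕ)
    (C : Set (Fin n)) (hC : IsVertexCover G C) (hCk : C.ncard ≤ k) :
    ∃ S : Set W, IsVertexCover H S ∧
      S.ncard ≤ k + f + G.edgeFinset.card + ∑ i, b i := by
  classical
  haveI hbz : ∀ i : Fin n, NeZero (b i) := fun i => ⟨by have := hb2 i; omega⟩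
  set S1 : Set W := {w | ∃ i t, w = gg.cyc i t ∧
    ((i ∈ C ∧ Even t.val) ∨ (i ∉ C ∧ ¬ Even t.val))} with hS1
  set S2 : Set W := gg.pend '' C with hS2
  set S3 : Set W := {w | ∃ (i j : Fin n) (h : G.Adj i j), w = gg.inter i j h ∧
    (i ∉ C ∨ (j ∈ C ∧ i < j))} with hS3
  set S4 : Set W := Set.range (fun t => gg.p3 t 1) with hS4
  have memc : ∀ (i : Fin n) (t : ZMod (2 * b i)),
      ((i ∈ C ∧ Even t.val) ∨ (i ∉ C ∧ ¬ Even t.val)) →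
      gg.cyc i t ∈ S1 ∪ S2 ∪ S3 ∪ S4 :=
    fun i t hc => Or.inl (Or.inl (Or.inl ⟨i, t, rfl, hc⟩))
  have memp : ∀ i ∈ C, gg.pend i ∈ S1 ∪ S2 ∪ S3 ∪ S4 :=
    fun i hi => Or.inl (Or.inl (Or.inr ⟨i, hi, rfl⟩))
  have memi : ∀ (i j : Fin n) (h : G.Adj i j), (i ∉ C ∨ (j ∈ C ∧ i < j)) →
      gg.inter i j h ∈ S1 ∪ S2 ∪ S3 ∪ S4 :=
    fun i j h hc => Or.inl (Or.inr ⟨i, j, h, rfl, hc⟩)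
  have mem3 : ∀ t : Fin f, gg.p3 t 1 ∈ S1 ∪ S2 ∪ S3 ∪ S4 :=
    fun t => Or.inr ⟨t, rfl⟩
  refine ⟨S1 ∪ S2 ∪ S3 ∪ S4, ?_, ?_⟩
  · intro x y hxy
    rw [gg.adj_iff] at hxy
    rcases hxy with ⟨i, t, (⟨rfl, rfl⟩ | ⟨rfl, rfl⟩)⟩ |
      ⟨i, (⟨rfl, rfl⟩ | ⟨rfl, rfl⟩)⟩ |
      ⟨i, j, h, (⟨rfl, rfl⟩ | ⟨rfl, rfl⟩)⟩ |
      ⟨i, j, h, rfl, rfl⟩ |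
      ⟨t, (⟨rfl, rfl⟩ | ⟨rfl, rfl⟩ | ⟨rfl, rfl⟩ | ⟨rfl, rfl⟩)⟩
    · by_cases hi : i ∈ C
      · by_cases he : Even t.val
        · exact Or.inl (memc i t (Or.inl ⟨hi, he⟩))
        · exact Or.inr (memc i (t+1) (Or.inl ⟨hi, (even_val_add_one_iff t).mpr he⟩))
      · by_cases he : Even t.val
        · exact Or.inr (memc i (t+1)
            (Or.inr ⟨hi, fun hcon => ((even_val_add_one_iff t).mp hcon) he⟩))
        · exact Or.inl (memc i t (Or.inr ⟨hi, he⟩))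
    · by_cases hi : i ∈ C
      · by_cases he : Even t.val
        · exact Or.inr (memc i t (Or.inl ⟨hi, he⟩))
        · exact Or.inl (memc i (t+1) (Or.inl ⟨hi, (even_val_add_one_iff t).mpr he⟩))
      · by_cases he : Even t.val
        · exact Or.inl (memc i (t+1)
            (Or.inr ⟨hi, fun hcon => ((even_val_add_one_iff t).mp hcon) he⟩))
        · exact Or.inr (memc i t (Or.inr ⟨hi, he⟩))
    · by_cases hi : i ∈ C
      · exact Or.inl (memp i hi)
      · exact Or.inr (memc i _ (Or.inr ⟨hi, Nat.not_even_iff_odd.mpr (gg.ρ_odd i)⟩))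
    · by_cases hi : i ∈ C
      · exact Or.inr (memp i hi)
      · exact Or.inl (memc i _ (Or.inr ⟨hi, Nat.not_even_iff_odd.mpr (gg.ρ_odd i)⟩))
    · by_cases hi : i ∈ C
      · exact Or.inl (memc i _ (Or.inl ⟨hi, gg.β_even i j h⟩))
      · exact Or.inr (memi i j h (Or.inl hi))
    · by_cases hi : i ∈ C
      · exact Or.inr (memc i _ (Or.inl ⟨hi, gg.β_even i j h⟩))
      · exact Or.inl (memi i j h (Or.inl hi))
    · by_cases hi : i ∈ C
      · by_cases hj : j ∈ C
        · rcases lt_or_gt_of_ne h.ne with hlt | hlt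
          · exact Or.inl (memi i j h (Or.inr ⟨hj, hlt⟩))
          · exact Or.inr (memi j i (G.adj_symm h) (Or.inr ⟨hi, hlt⟩))
        · exact Or.inr (memi j i (G.adj_symm h) (Or.inl hj))
      · exact Or.inl (memi i j h (Or.inl hi))
    · exact Or.inr (mem3 t)
    · exact Or.inl (mem3 t)
    · exact Or.inl (mem3 t)
    · exact Or.inr (mem3 t)
  · have h1 : S1.ncard ≤ ∑ i, b i := by
      have himg : S1 = (fun p : Σ i : Fin n, ZMod (2 * b i) => gg.cyc p.1 p.2) ''
          {p : Σ i : Fin n, ZMod (2 * b i) |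
            (p.1 ∈ C ∧ Even p.2.val) ∨ (p.1 ∉ C ∧ ¬ Even p.2.val)} := by
        rw [hS1]; ext w
        constructor
        · rintro ⟨i, t, rfl, hc⟩; exact ⟨⟨i, t⟩, hc, rfl⟩
        · rintro ⟨⟨i, t⟩, hc, rfl⟩; exact ⟨i, t, rfl, hc⟩
      rw [himg]
      refine le_trans (Set.ncard_image_le (Set.toFinite _)) ?_
      rw [Set.ncard_eq_toFinset_card']
      have hfe : {p : Σ i : Fin n, ZMod (2 * b i) |
            (p.1 ∈ C ∧ Even p.2.val) ∨ (p.1 ∉ C ∧ ¬ Even p.2.val)}.toFinset =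
          Finset.univ.sigma (fun i => Finset.univ.filter
            (fun t : ZMod (2 * b i) => (i ∈ C ∧ Even t.val) ∨ (i ∉ C ∧ ¬ Even t.val))) := by
        ext ⟨i, t⟩
        simp
      rw [hfe, Finset.card_sigma]
      refine le_of_eq (Finset.sum_congr rfl (fun i _ => ?_))
      by_cases hi : i ∈ C
      · rw [Finset.filter_congr (q := fun t : ZMod (2 * b i) => Even t.val)
          (fun t _ => by simp [hi])]
        exact (card_even_filter (b := b i)).1
      · rw [Finset.filter_congr (q := fun t : ZMod (2 * b i) => ¬ Even t.val)
          (fun t _ => by simp [hi])]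
        exact (card_even_filter (b := b i)).2
    have h2 : S2.ncard ≤ k := le_trans (Set.ncard_image_le (Set.toFinite _)) hCk
    have h3 : S3.ncard ≤ G.edgeFinset.card := by
      have himg : S3 = (fun q : Σ' (i : Fin n) (j : Fin n), G.Adj i j =>
            gg.inter q.1 q.2.1 q.2.2) ''
          {q : Σ' (i : Fin n) (j : Fin n), G.Adj i j |
            q.1 ∉ C ∨ (q.2.1 ∈ C ∧ q.1 < q.2.1)} := by
        rw [hS3]; ext w
        constructor
        · rintro ⟨i, j, h, rfl, hc⟩; exact ⟨⟨i, j, h⟩, hc, rfl⟩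
        · rintro ⟨⟨i, j, h⟩, hc, rfl⟩; exact ⟨i, j, h, rfl, hc⟩
      rw [himg]
      refine le_trans (Set.ncard_image_le (Set.toFinite _)) ?_
      have hle : {q : Σ' (i : Fin n) (j : Fin n), G.Adj i j |
            q.1 ∉ C ∨ (q.2.1 ∈ C ∧ q.1 < q.2.1)}.ncard ≤ G.edgeSet.ncard := by
        refine Set.ncard_le_ncard_of_injOn (fun q => s(q.1, q.2.1)) ?_ ?_ (Set.toFinite _)
        · rintro ⟨i, j, h⟩ _
          exact G.mem_edgeSet.mpr h
        · rintro ⟨i, j, h⟩ hq ⟨i', j', h'⟩ hq' he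
          simp only [Sym2.eq_iff] at he
          rcases he with ⟨rfl, rfl⟩ | ⟨rfl, rfl⟩
          · rfl
          · exfalso
            simp only [Set.mem_setOf_eq] at hq hq'
            rcases hq with hq1 | ⟨hq2, hlt⟩ <;> rcases hq' with hq1' | ⟨hq2', hlt'⟩
            · rcases hC h with hcc | hcc
              · exact hq1 hcc
              · exact hq1' hcc
            · exact hq1 hq2'
            · exact hq1' hq2
            · exact absurd (hlt.trans hlt') (lt_irrefl _)
      refine le_trans hle ?_
      rw [← SimpleGraph.coe_edgeFinset, Set.ncard_coe_finset]
    have h4 : S4.ncard ≤ f := by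
      rw [hS4, ← Set.image_univ]
      refine le_trans (Set.ncard_image_le (Set.toFinite _)) ?_
      rw [Set.ncard_univ]
      simp
    have hu : (S1 ∪ S2 ∪ S3 ∪ S4).ncard ≤ S1.ncard + S2.ncard + S3.ncard + S4.ncard := by
      refine le_trans (Set.ncard_union_le _ _) ?_
      have := Set.ncard_union_le (S1 ∪ S2) S3
      have := Set.ncard_union_le S1 S2
      omega
    omega

lemma reverse_dir {n : ℕ} (G : SimpleGraph (Fin n)) [DecidableRel G.Adj]
    (f : ℕ) (b : Fin n → ℕ) {W : Type*} (H : SimpleGraph W)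
    (hb2 : ∀ i, 2 ≤ b i) (gg : GadgetGraph G f b H) (k : ℕ)
    (S : Set W) (hS : IsVertexCover H S)
    (hSk : S.ncard ≤ k + f + G.edgeFinset.card + ∑ i, b i) :
    ∃ C : Set (Fin n), IsVertexCover G C ∧ C.ncard ≤ k := by
  classical
  haveI hbz : ∀ i : Fin n, NeZero (b i) := fun i => ⟨by have := hb2 i; omega⟩
  haveI : Finite W := Finite.of_surjective _ gg.pieces_bij.surjective
  haveI : Fintype W := Fintype.ofFinite W
  set pre : (i : Fin n) → Finset (ZMod (2 * b i)) :=
    fun i => Finset.univ.filter (fun t => gg.cyc i t ∈ S) with hpre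
  have hpmem : ∀ i t, t ∈ pre i ↔ gg.cyc i t ∈ S := by
    intro i t; rw [hpre]; simp
  have hpcov : ∀ i t, t ∈ pre i ∨ t + 1 ∈ pre i := by
    intro i t
    have hadj : H.Adj (gg.cyc i t) (gg.cyc i (t+1)) :=
      (gg.adj_iff _ _).2 (Or.inl ⟨i, t, Or.inl ⟨rfl, rfl⟩⟩)
    rcases hS hadj with h | h
    · exact Or.inl ((hpmem i t).2 h)
    · exact Or.inr ((hpmem i (t+1)).2 h)
  have hlb : ∀ i, b i ≤ (pre i).card := fun i => cyc_cover_lb _ (hpcov i)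
  set heavy : Fin n → Prop :=
    fun i => b i + 1 ≤ (pre i).card + (if gg.pend i ∈ S then 1 else 0) with hheavy
  have hlight : ∀ i, ¬ heavy i → ∀ j (h : G.Adj i j), gg.inter i j h ∈ S := by
    intro i hh j h
    simp only [hheavy, not_le] at hh
    have hpend : gg.pend i ∉ S := by
      intro hp; rw [if_pos hp] at hh; have := hlb i; omega
    rw [if_neg hpend] at hh
    have hcard : (pre i).card ≤ b i := by omega
    have hadjp : H.Adj (gg.pend i) (gg.cyc i (gg.ρ i)) :=
      (gg.adj_iff _ _).2 (Or.inr (Or.inl ⟨i, Or.inl ⟨rfl, rfl⟩⟩))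
    have hρ : gg.ρ i ∈ pre i := by
      rcases hS hadjp with h' | h'
      · exact absurd h' hpend
      · exact (hpmem i _).2 h'
    have hβ : gg.β i j h ∉ pre i :=
      cyc_cover_struct (pre i) (hpcov i) hcard hρ
        (by simpa [Nat.not_even_iff_odd] using gg.ρ_odd i) (gg.β_even i j h)
    have hadjβ : H.Adj (gg.cyc i (gg.β i j h)) (gg.inter i j h) :=
      (gg.adj_iff _ _).2 (Or.inr (Or.inr (Or.inl ⟨i, j, h, Or.inl ⟨rfl, rfl⟩⟩)))
    rcases hS hadjβ with h' | h'
    · exact absurd ((hpmem i _).2 h') hβ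
    · exact h'
  set CE : Finset (Fin n) := Finset.univ.filter (fun i => ∃ (j : Fin n) (h : G.Adj i j),
    i < j ∧ gg.inter i j h ∈ S ∧ gg.inter j i (G.adj_symm h) ∈ S) with hCE
  set HV : Finset (Fin n) := Finset.univ.filter heavy with hHV
  refine ⟨↑(HV ∪ CE), ?_, ?_⟩
  · intro i j hadj
    by_contra hcon
    push_neg at hcon
    obtain ⟨hi, hj⟩ := hcon
    simp only [Finset.coe_union, Set.mem_union, Finset.mem_coe, hHV, hCE,
      Finset.mem_filter, Finset.mem_univ, true_and, not_or] at hi hj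
    have h1 := hlight i hi.1 j hadj
    have h2 := hlight j hj.1 i (G.adj_symm hadj)
    rcases lt_or_gt_of_ne hadj.ne with hlt | hlt
    · exact hi.2 ⟨j, hadj, hlt, h1, h2⟩
    · exact hj.2 ⟨i, G.adj_symm hadj, hlt, h2, h1⟩
  · -- cardinality
    set m := G.edgeFinset.card with hm
    set Sfin := S.toFinset with hSfin
    have hmemS : ∀ w : W, w ∈ Sfin ↔ w ∈ S := fun w => Set.mem_toFinset
    set T1 := Sfin.filter (fun w => ∃ i t, w = gg.cyc i t) with hT1
    set T2 := Sfin.filter (fun w => ∃ i, w = gg.pend i) with hT2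
    set T3 := Sfin.filter (fun w => ∃ (i j : Fin n) (h : G.Adj i j), w = gg.inter i j h) with hT3
    set T4 := Sfin.filter (fun w => ∃ t a, w = gg.p3 t a) with hT4
    have hsplit : T1.card + T2.card + T3.card + T4.card ≤ Sfin.card := by
      have hsub : T1 ∪ T2 ∪ T3 ∪ T4 ⊆ Sfin := by
        intro w hw
        simp only [Finset.mem_union] at hw
        rcases hw with ((hw | hw) | hw) | hw <;> exact (Finset.mem_filter.1 hw).1
      have d12 : Disjoint T1 T2 := by
        rw [Finset.disjoint_left]; rintro w hw1 hw2
        obtain ⟨-, i, t, he1⟩ := Finset.mem_filter.1 hw1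
        obtain ⟨-, i', he2⟩ := Finset.mem_filter.1 hw2
        exact gg.cyc_ne_pend (he1.symm.trans he2)
      have d13 : Disjoint T1 T3 := by
        rw [Finset.disjoint_left]; rintro w hw1 hw2
        obtain ⟨-, i, t, he1⟩ := Finset.mem_filter.1 hw1
        obtain ⟨-, i', j', h', he2⟩ := Finset.mem_filter.1 hw2
        exact gg.cyc_ne_inter (he1.symm.trans he2)
      have d14 : Disjoint T1 T4 := by
        rw [Finset.disjoint_left]; rintro w hw1 hw2
        obtain ⟨-, i, t, he1⟩ := Finset.mem_filter.1 hw1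
        obtain ⟨-, s', a', he2⟩ := Finset.mem_filter.1 hw2
        exact gg.cyc_ne_p3 (he1.symm.trans he2)
      have d23 : Disjoint T2 T3 := by
        rw [Finset.disjoint_left]; rintro w hw1 hw2
        obtain ⟨-, i, he1⟩ := Finset.mem_filter.1 hw1
        obtain ⟨-, i', j', h', he2⟩ := Finset.mem_filter.1 hw2
        exact gg.pend_ne_inter (he1.symm.trans he2)
      have d24 : Disjoint T2 T4 := by
        rw [Finset.disjoint_left]; rintro w hw1 hw2
        obtain ⟨-, i, he1⟩ := Finset.mem_filter.1 hw1
        obtain ⟨-, s', a', he2⟩ := Finset.mem_filter.1 hw2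
        exact gg.pend_ne_p3 (he1.symm.trans he2)
      have d34 : Disjoint T3 T4 := by
        rw [Finset.disjoint_left]; rintro w hw1 hw2
        obtain ⟨-, i', j', h', he1⟩ := Finset.mem_filter.1 hw1
        obtain ⟨-, s', a', he2⟩ := Finset.mem_filter.1 hw2
        exact gg.inter_ne_p3 (he1.symm.trans he2)
      have e1 : (T1 ∪ T2 ∪ T3 ∪ T4).card = T1.card + T2.card + T3.card + T4.card := by
        rw [Finset.card_union_of_disjoint (by
            simp only [Finset.disjoint_union_left]; exact ⟨⟨d14, d24⟩, d34⟩),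
          Finset.card_union_of_disjoint (by
            simp only [Finset.disjoint_union_left]; exact ⟨d13, d23⟩),
          Finset.card_union_of_disjoint d12]
      calc T1.card + T2.card + T3.card + T4.card = (T1 ∪ T2 ∪ T3 ∪ T4).card := e1.symm
        _ ≤ Sfin.card := Finset.card_le_card hsub
    have hA : ∑ i, (pre i).card ≤ T1.card := by
      have h := Finset.card_le_card_of_injOn
        (s := Finset.univ.sigma (fun i => pre i)) (t := T1)
        (fun p => gg.cyc p.1 p.2)
        (by
          rintro ⟨i, t⟩ hp
          rw [Finset.mem_coe, Finset.mem_sigma] at hp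
          exact Finset.mem_filter.2 ⟨(hmemS _).2 ((hpmem i t).1 hp.2), ⟨i, t, rfl⟩⟩)
        (by
          rintro ⟨i, t⟩ - ⟨i', t'⟩ - he
          exact gg.cyc_injOn he)
      rwa [Finset.card_sigma] at h
    set B : Finset (Fin n) := Finset.univ.filter (fun i => gg.pend i ∈ S) with hB0
    have hB : B.card ≤ T2.card := by
      refine Finset.card_le_card_of_injOn gg.pend ?_ ?_
      · intro i hi
        rw [hB0, Finset.mem_coe, Finset.mem_filter] at hi
        exact Finset.mem_filter.2 ⟨(hmemS _).2 hi.2, ⟨i, rfl⟩⟩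
      · intro i _ i' _ he
        exact gg.pend_inj he
    set I3 : Finset (Fin n × Fin n) := Finset.univ.filter
      (fun p => ∃ h : G.Adj p.1 p.2, gg.inter p.1 p.2 h ∈ S) with hI3
    have hI3mem : ∀ p : Fin n × Fin n,
        p ∈ I3 ↔ ∃ h : G.Adj p.1 p.2, gg.inter p.1 p.2 h ∈ S := by
      intro p; rw [hI3]; simp
    have hI : I3.card ≤ T3.card := by
      rw [← Finset.card_attach (s := I3)]
      refine Finset.card_le_card_of_injOn
        (fun q => gg.inter q.1.1 q.1.2 ((hI3mem q.1).1 q.2).choose) ?_ ?_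
      · intro q _
        refine Finset.mem_filter.2 ⟨(hmemS _).2 ((hI3mem q.1).1 q.2).choose_spec, ?_⟩
        exact ⟨q.1.1, q.1.2, ((hI3mem q.1).1 q.2).choose, rfl⟩
      · intro q _ q' _ he
        have := gg.inter_inj he
        apply Subtype.ext
        exact Prod.ext this.1 this.2
    have hF : f ≤ T4.card := by
      have h := Finset.card_le_card_of_injOn
        (s := (Finset.univ : Finset (Fin f))) (t := T4)
        (fun t => if gg.p3 t 0 ∈ S then gg.p3 t 0 else gg.p3 t 1)
        (by
          intro t _
          dsimp only
          by_cases h0 : gg.p3 t 0 ∈ S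
          · rw [if_pos h0]
            exact Finset.mem_filter.2 ⟨(hmemS _).2 h0, t, 0, rfl⟩
          · rw [if_neg h0]
            have hadj : H.Adj (gg.p3 t 0) (gg.p3 t 1) :=
              (gg.adj_iff _ _).2 (Or.inr (Or.inr (Or.inr (Or.inr
                ⟨t, Or.inl ⟨rfl, rfl⟩⟩))))
            rcases hS hadj with h' | h'
            · exact absurd h' h0
            · exact Finset.mem_filter.2 ⟨(hmemS _).2 h', t, 1, rfl⟩)
        (by
          intro t _ t' _ he
          dsimp only at he
          by_cases h0 : gg.p3 t 0 ∈ S <;> by_cases h0' : gg.p3 t' 0 ∈ S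
          · rw [if_pos h0, if_pos h0'] at he
            exact (gg.p3_inj he).1
          · rw [if_pos h0, if_neg h0'] at he
            exact absurd (gg.p3_inj he).2 (by decide)
          · rw [if_neg h0, if_pos h0'] at he
            exact absurd (gg.p3_inj he).2 (by decide)
          · rw [if_neg h0, if_neg h0'] at he
            exact (gg.p3_inj he).1)
      simpa using h
    have hBcard : B.card = ∑ i, (if gg.pend i ∈ S then 1 else 0) := by
      rw [hB0]; exact Finset.card_filter _ _
    have hHVcard : HV.card = ∑ i, (if heavy i then 1 else 0) := by
      rw [hHV]; exact Finset.card_filter _ _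
    have ineq1 : ∑ i, b i + HV.card ≤ ∑ i, (pre i).card + B.card := by
      rw [hBcard, hHVcard, ← Finset.sum_add_distrib, ← Finset.sum_add_distrib]
      refine Finset.sum_le_sum (fun i _ => ?_)
      by_cases hh : heavy i
      · rw [if_pos hh]
        have hh' := hh
        simp only [hheavy] at hh'
        by_cases hp : gg.pend i ∈ S
        · rw [if_pos hp]; rw [if_pos hp] at hh'; omega
        · rw [if_neg hp]; rw [if_neg hp] at hh'; omega
      · rw [if_neg hh]
        have := hlb i
        by_cases hp : gg.pend i ∈ S
        · rw [if_pos hp]; omega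
        · rw [if_neg hp]; omega
    set LT : Finset (Fin n × Fin n) :=
      Finset.univ.filter (fun p => G.Adj p.1 p.2 ∧ p.1 < p.2) with hLT
    have hLTm : LT.card = m := by
      rw [hm]
      refine Finset.card_bij (fun p _ => s(p.1, p.2)) ?_ ?_ ?_
      · rintro ⟨i, j⟩ hp
        rw [hLT, Finset.mem_filter] at hp
        exact SimpleGraph.mem_edgeFinset.2 (G.mem_edgeSet.2 hp.2.1)
      · rintro ⟨i, j⟩ hp ⟨i', j'⟩ hp' he
        rw [hLT, Finset.mem_filter] at hp hp'
        rw [Sym2.eq_iff] at he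
        rcases he with ⟨rfl, rfl⟩ | ⟨rfl, rfl⟩
        · rfl
        · exact absurd (hp.2.2.trans hp'.2.2) (lt_irrefl _)
      · intro e he
        induction e using Sym2.ind with
        | _ a c =>
          have hadj : G.Adj a c := G.mem_edgeSet.1 (SimpleGraph.mem_edgeFinset.1 he)
          rcases lt_or_gt_of_ne hadj.ne with hlt | hlt
          · exact ⟨(a, c), by rw [hLT]; simp [hadj, hlt], rfl⟩
          · exact ⟨(c, a), by rw [hLT]; simp [hadj.symm, hlt], Sym2.eq_swap⟩
    have ineq2 : m + CE.card ≤ I3.card := by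
      set g1 : Fin n × Fin n → Fin n × Fin n :=
        fun p => if p.swap ∈ I3 then p.swap else p with hg1
      set g2 : Fin n → Fin n × Fin n := fun i =>
        if h : ∃ (j : Fin n) (h : G.Adj i j), i < j ∧ gg.inter i j h ∈ S ∧
            gg.inter j i (G.adj_symm h) ∈ S
        then (i, h.choose) else (i, i) with hg2
      have hg1maps : ∀ p ∈ LT, g1 p ∈ I3 := by
        rintro ⟨a, c⟩ hp
        rw [hLT, Finset.mem_filter] at hp
        obtain ⟨-, hadj, hlt⟩ := hp
        simp only [hg1]
        by_cases hs : (a, c).swap ∈ I3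
        · rw [if_pos hs]; exact hs
        · rw [if_neg hs]
          have hmid : H.Adj (gg.inter a c hadj) (gg.inter c a (G.adj_symm hadj)) :=
            (gg.adj_iff _ _).2 (Or.inr (Or.inr (Or.inr (Or.inl
              ⟨a, c, hadj, rfl, rfl⟩))))
          rcases hS hmid with h' | h'
          · exact (hI3mem (a, c)).2 ⟨hadj, h'⟩
          · exact absurd ((hI3mem (c, a)).2 ⟨G.adj_symm hadj, h'⟩) hs
      have hg1inj : Set.InjOn g1 ↑LT := by
        rintro ⟨a, c⟩ ha ⟨a', c'⟩ ha' he
        simp only [Finset.mem_coe, hLT, Finset.mem_filter] at ha ha'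
        simp only [hg1] at he
        by_cases hs : (a, c).swap ∈ I3 <;> by_cases hs' : (a', c').swap ∈ I3
        · rw [if_pos hs, if_pos hs'] at he
          have h1 : c = c' := (Prod.ext_iff.1 he).1
          have h2 : a = a' := (Prod.ext_iff.1 he).2
          rw [h1, h2]
        · rw [if_pos hs, if_neg hs'] at he
          have h1 : c = a' := (Prod.ext_iff.1 he).1
          have h2 : a = c' := (Prod.ext_iff.1 he).2
          subst h1; subst h2
          exact absurd (ha.2.2.trans ha'.2.2) (lt_irrefl _)
        · rw [if_neg hs, if_pos hs'] at he
          have h1 : a = c' := (Prod.ext_iff.1 he).1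
          have h2 : c = a' := (Prod.ext_iff.1 he).2
          subst h1; subst h2
          exact absurd (ha.2.2.trans ha'.2.2) (lt_irrefl _)
        · rw [if_neg hs, if_neg hs'] at he
          exact he
      have himg1 : (LT.image g1).card = LT.card := Finset.card_image_of_injOn hg1inj
      have hg2maps : ∀ i ∈ CE, g2 i ∈ I3 := by
        intro i hi
        rw [hCE, Finset.mem_filter] at hi
        have hex := hi.2
        simp only [hg2]
        rw [dif_pos hex]
        obtain ⟨h, hlt, h1, h2⟩ := hex.choose_spec
        exact (hI3mem (i, hex.choose)).2 ⟨h, h1⟩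
      have hg2inj : Set.InjOn g2 ↑CE := by
        intro i _ i' _ he
        have e1 : (g2 i).1 = i := by
          simp only [hg2]; split <;> rfl
        have e1' : (g2 i').1 = i' := by
          simp only [hg2]; split <;> rfl
        rw [← e1, ← e1', he]
      have himg2 : (CE.image g2).card = CE.card := Finset.card_image_of_injOn hg2inj
      have hdisj : Disjoint (LT.image g1) (CE.image g2) := by
        rw [Finset.disjoint_left]
        intro x hx1 hx2
        obtain ⟨p, hp, hpx⟩ := Finset.mem_image.1 hx1
        obtain ⟨i, hi, hix⟩ := Finset.mem_image.1 hx2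
        rw [hCE, Finset.mem_filter] at hi
        have hex := hi.2
        simp only [hg2] at hix
        rw [dif_pos hex] at hix
        obtain ⟨h, hlt, h1, h2⟩ := hex.choose_spec
        obtain ⟨a, c⟩ := p
        rw [hLT, Finset.mem_filter] at hp
        obtain ⟨-, hadj, hplt⟩ := hp
        simp only [hg1] at hpx
        by_cases hs : (a, c).swap ∈ I3
        · rw [if_pos hs] at hpx
          have hxe : x = (c, a) := hpx.symm
          rw [hxe] at hix
          have e1 : i = c := (Prod.ext_iff.1 hix).1
          have e2 : hex.choose = a := (Prod.ext_iff.1 hix).2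
          have hplt' : a.val < c.val := hplt
          have hlt' : i.val < hex.choose.val := hlt
          have e1' : i.val = c.val := congrArg Fin.val e1
          have e2' : hex.choose.val = a.val := congrArg Fin.val e2
          omega
        · rw [if_neg hs] at hpx
          have hxe : x = (a, c) := hpx.symm
          rw [hxe] at hix
          have e1 : i = a := (Prod.ext_iff.1 hix).1
          have e2 : hex.choose = c := (Prod.ext_iff.1 hix).2
          apply hs
          refine (hI3mem ((a, c).swap)).2 ?_
          rw [← e1, ← e2]
          exact ⟨G.adj_symm h, h2⟩
      have hcu : LT.card + CE.card ≤ I3.card := by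
        rw [← himg1, ← himg2, ← Finset.card_union_of_disjoint hdisj]
        exact Finset.card_le_card (Finset.union_subset
          (Finset.image_subset_iff.2 hg1maps) (Finset.image_subset_iff.2 hg2maps))
      omega
    have hC1 : (↑(HV ∪ CE) : Set (Fin n)).ncard ≤ HV.card + CE.card := by
      rw [Set.ncard_coe_finset]
      exact Finset.card_union_le _ _
    have hS' : Sfin.card ≤ k + f + m + ∑ i, b i := by
      rw [hSfin, ← Set.ncard_eq_toFinset_card']
      exact hSk
    omega

/-- `G` has a vertex cover of size at most `k` if and only if a gadget
graph `H` for `(G, f, b)` has a vertex cover of size at most `k + f + m + ∑ i, b i`. -/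
theorem stmt4 {n : ℕ} (G : SimpleGraph (Fin n)) [DecidableRel G.Adj]
    (f : ℕ) (b : Fin n → ℕ) {W : Type*} (H : SimpleGraph W)
    (hniso : ∀ i : Fin n, ∃ j, G.Adj i j)
    (hb2 : ∀ i, 2 ≤ b i)
    (hbdeg : ∀ i, b i = G.degree i ∨ b i = G.degree i + 1 ∨ b i = G.degree i + 2)
    (gg : GadgetGraph G f b H)
    (k : ℕ) :
    (∃ C : Set (Fin n), IsVertexCover G C ∧ C.ncard ≤ k) ↔
    (∃ S : Set W, IsVertexCover H S ∧
      S.ncard ≤ k + f + G.edgeFinset.card + ∑ i, b i) := by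
  constructor
  · rintro ⟨C, hC, hCk⟩
    exact forward_dir G f b H hb2 gg k C hC hCk
  · rintro ⟨S, hS, hSk⟩
    exact reverse_dir G f b H hb2 gg k S hS hSk
end

section
/- Let b ≥ 2 and let H be the graph consisting of a cycle on 2b vertices whose vertices are colored alternately blue and red around the cycle, together with one additional vertex z whose unique neighbor is one red vertex of the cycle. Then: (i) the set of red vertices is a vertex cover of H of size b; (ii) the set of blue vertices together with z is a vertex cover of H of size b + 1; (iii) every vertex cover of H has size at least b, and a vertex cover of H of size exactly b is equal to the set of red vertices. -/

lemma myCardOdd (b : ℕ) (hb : 1 ≤ b) : Nat.card {t : ZMod (2*b) | Odd t.val} = b := by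
  haveI : NeZero (2*b) := ⟨by omega⟩
  have e : {t : ZMod (2*b) | Odd t.val} ≃ Fin b := by
    refine ⟨fun t => ⟨t.1.val / 2, ?_⟩, fun k => ⟨((2*k.1+1 : ℕ) : ZMod (2*b)), ?_⟩, ?_, ?_⟩
    · have h1 := t.2
      have h2 := ZMod.val_lt t.1
      rw [Set.mem_setOf_eq, Nat.odd_iff] at h1
      omega
    · show Odd _
      rw [ZMod.val_cast_of_lt (by omega : 2*k.1+1 < 2*b), Nat.odd_iff]
      omega
    · intro t
      apply Subtype.ext
      have h1 := t.2
      rw [Set.mem_setOf_eq, Nat.odd_iff] at h1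
      have : 2*(t.1.val/2)+1 = t.1.val := by omega
      simp only [this]
      exact ZMod.natCast_zmod_val t.1
    · intro k
      apply Fin.ext
      show (((2*k.1+1 : ℕ) : ZMod (2*b))).val / 2 = k.1
      rw [ZMod.val_cast_of_lt (by omega : 2*k.1+1 < 2*b)]
      omega
  rw [Nat.card_congr e, Nat.card_eq_fintype_card, Fintype.card_fin]

lemma myCardEven (b : ℕ) (hb : 1 ≤ b) : Nat.card {t : ZMod (2*b) | Even t.val} = b := by
  haveI : NeZero (2*b) := ⟨by omega⟩
  have e : {t : ZMod (2*b) | Even t.val} ≃ Fin b := by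
    refine ⟨fun t => ⟨t.1.val / 2, ?_⟩, fun k => ⟨((2*k.1 : ℕ) : ZMod (2*b)), ?_⟩, ?_, ?_⟩
    · have h1 := t.2
      have h2 := ZMod.val_lt t.1
      rw [Set.mem_setOf_eq, Nat.even_iff] at h1
      omega
    · show Even _
      rw [ZMod.val_cast_of_lt (by omega : 2*k.1 < 2*b), Nat.even_iff]
      omega
    · intro t
      apply Subtype.ext
      have h1 := t.2
      rw [Set.mem_setOf_eq, Nat.even_iff] at h1
      have : 2*(t.1.val/2) = t.1.val := by omega
      simp only [this]
      exact ZMod.natCast_zmod_val t.1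
    · intro k
      apply Fin.ext
      show (((2*k.1 : ℕ) : ZMod (2*b))).val / 2 = k.1
      rw [ZMod.val_cast_of_lt (by omega : 2*k.1 < 2*b)]
      omega
  rw [Nat.card_congr e, Nat.card_eq_fintype_card, Fintype.card_fin]

/-- Let `b ≥ 2` and let `H` consist of a cycle on `2b` vertices
(identified with `ZMod (2*b)`), colored alternately blue (even) and red (odd), together
with one additional vertex `z` whose unique neighbor is the red cycle vertex `r`.  Then:
(i) the red vertices form a vertex cover of size `b`; (ii) the blue vertices together
with `z` form a vertex cover of size `b + 1`; (iii) every vertex cover has size at least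
`b`, and a vertex cover of size exactly `b` equals the set of red vertices. -/
theorem stmt6 (b : ℕ) (hb : 2 ≤ b) (r : ZMod (2 * b)) (hr : Odd r.val)
    (H : SimpleGraph (ZMod (2 * b) ⊕ Unit))
    (hH : ∀ x y : ZMod (2 * b) ⊕ Unit, H.Adj x y ↔
      ((∃ t, (x = Sum.inl t ∧ y = Sum.inl (t + 1)) ∨ (y = Sum.inl t ∧ x = Sum.inl (t + 1))) ∨
       (x = Sum.inr () ∧ y = Sum.inl r) ∨ (y = Sum.inr () ∧ x = Sum.inl r))) :
    (IsVertexCover H {x | ∃ t, Odd t.val ∧ x = Sum.inl t} ∧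
      ({x | ∃ t, Odd t.val ∧ x = Sum.inl t} : Set (ZMod (2 * b) ⊕ Unit)).ncard = b) ∧
    (IsVertexCover H ({x | ∃ t, Even t.val ∧ x = Sum.inl t} ∪ {Sum.inr ()}) ∧
      ({x | ∃ t, Even t.val ∧ x = Sum.inl t} ∪ {Sum.inr ()} :
        Set (ZMod (2 * b) ⊕ Unit)).ncard = b + 1) ∧
    (∀ S : Set (ZMod (2 * b) ⊕ Unit), IsVertexCover H S →
      b ≤ S.ncard ∧ (S.ncard = b → S = {x | ∃ t, Odd t.val ∧ x = Sum.inl t})) := by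
  haveI : NeZero (2 * b) := ⟨by omega⟩
  have hpar : ∀ a c : ZMod (2*b), (a+c).val % 2 = (a.val + c.val) % 2 := by
    intro a c
    rw [ZMod.val_add, Nat.mod_mod_of_dvd _ ⟨b, rfl⟩]
  have h1v : (1 : ZMod (2*b)).val = 1 := by rw [ZMod.val_one_eq_one_mod]; exact Nat.mod_eq_of_lt (by omega)
  have hstep : ∀ t : ZMod (2*b), (t+1).val % 2 = (t.val + 1) % 2 := by
    intro t; rw [hpar, h1v]
  -- (i) cover
  have coverR : IsVertexCover H {x | ∃ t, Odd t.val ∧ x = Sum.inl t} := by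
    intro x y hxy
    rw [hH] at hxy
    rcases hxy with ⟨t, ⟨hx, hy⟩ | ⟨hy, hx⟩⟩ | ⟨hx, hy⟩ | ⟨hy, hx⟩
    · rcases Nat.even_or_odd t.val with he | ho
      · right; refine ⟨t+1, ?_, hy⟩
        have := hstep t
        rw [Nat.even_iff] at he; rw [Nat.odd_iff]; omega
      · left; exact ⟨t, ho, hx⟩
    · rcases Nat.even_or_odd t.val with he | ho
      · left; refine ⟨t+1, ?_, hx⟩
        have := hstep t
        rw [Nat.even_iff] at he; rw [Nat.odd_iff]; omega
      · right; exact ⟨t, ho, hy⟩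
    · right; exact ⟨r, hr, hy⟩
    · left; exact ⟨r, hr, hx⟩
  -- (ii) cover
  have coverB : IsVertexCover H ({x | ∃ t, Even t.val ∧ x = Sum.inl t} ∪ {Sum.inr ()}) := by
    intro x y hxy
    rw [hH] at hxy
    rcases hxy with ⟨t, ⟨hx, hy⟩ | ⟨hy, hx⟩⟩ | ⟨hx, hy⟩ | ⟨hy, hx⟩
    · rcases Nat.even_or_odd t.val with he | ho
      · left; exact Or.inl ⟨t, he, hx⟩
      · right; left; refine ⟨t+1, ?_, hy⟩
        have := hstep t
        rw [Nat.odd_iff] at ho; rw [Nat.even_iff]; omega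
    · rcases Nat.even_or_odd t.val with he | ho
      · right; exact Or.inl ⟨t, he, hy⟩
      · left; left; refine ⟨t+1, ?_, hx⟩
        have := hstep t
        rw [Nat.odd_iff] at ho; rw [Nat.even_iff]; omega
    · left; right; rw [hx]; rfl
    · right; right; rw [hy]; rfl
  -- sizes
  have hRedEq : ({x | ∃ t, Odd t.val ∧ x = Sum.inl t} : Set (ZMod (2*b) ⊕ Unit))
      = Sum.inl '' {t | Odd t.val} := by
    ext x
    simp only [Set.mem_setOf_eq, Set.mem_image]
    constructor
    · rintro ⟨t, ht, rfl⟩; exact ⟨t, ht, rfl⟩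
    · rintro ⟨t, ht, rfl⟩; exact ⟨t, ht, rfl⟩
  have hBlueEq : ({x | ∃ t, Even t.val ∧ x = Sum.inl t} : Set (ZMod (2*b) ⊕ Unit))
      = Sum.inl '' {t | Even t.val} := by
    ext x
    simp only [Set.mem_setOf_eq, Set.mem_image]
    constructor
    · rintro ⟨t, ht, rfl⟩; exact ⟨t, ht, rfl⟩
    · rintro ⟨t, ht, rfl⟩; exact ⟨t, ht, rfl⟩
  have hRedCard : ({x | ∃ t, Odd t.val ∧ x = Sum.inl t} : Set (ZMod (2*b) ⊕ Unit)).ncard = b := by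
    rw [hRedEq, Set.ncard_image_of_injective _ Sum.inl_injective,
      ← Nat.card_coe_set_eq, myCardOdd b (by omega)]
  have hBlueCard : ({x | ∃ t, Even t.val ∧ x = Sum.inl t} ∪ {Sum.inr ()} :
      Set (ZMod (2*b) ⊕ Unit)).ncard = b + 1 := by
    rw [Set.ncard_union_eq (by simp [hBlueEq]) (Set.toFinite _) (Set.toFinite _),
      hBlueEq, Set.ncard_image_of_injective _ Sum.inl_injective,
      ← Nat.card_coe_set_eq, myCardEven b (by omega), Set.ncard_singleton]
  refine ⟨⟨coverR, hRedCard⟩, ⟨coverB, hBlueCard⟩, ?_⟩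
  -- (iii)
  intro S hS
  classical
  have hEdge : ∀ x : ZMod (2*b), Sum.inl x ∈ S ∨ Sum.inl (x+1) ∈ S := by
    intro x
    exact hS ((hH _ _).mpr (Or.inl ⟨x, Or.inl ⟨rfl, rfl⟩⟩))
  set f : {t : ZMod (2*b) | Even t.val} → S := fun x =>
    if h : Sum.inl x.1 ∈ S then ⟨_, h⟩ else ⟨_, (hEdge x.1).resolve_left h⟩ with hfdef
  have hf : ∀ x, (f x).1 = Sum.inl x.1 ∨ (f x).1 = Sum.inl (x.1+1) := by
    intro x
    by_cases h : Sum.inl x.1 ∈ S <;> simp [hfdef, h]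
  have hparity : ∀ x y : ZMod (2*b), Even x.val → Even y.val → x ≠ y + 1 := by
    intro x y hx hy hxy
    have := hstep y
    rw [Nat.even_iff] at hx hy
    rw [hxy] at hx
    omega
  have hfinj : Function.Injective f := by
    intro x y hxy
    apply Subtype.ext
    have h1 := hf x
    have h2 := hf y
    rw [hxy] at h1
    rcases h1 with h1 | h1 <;> rcases h2 with h2 | h2 <;> rw [h1] at h2 <;>
      have h3 := Sum.inl_injective h2
    · exact h3
    · exact absurd h3 (hparity x.1 y.1 x.2 y.2)
    · exact absurd h3.symm (hparity y.1 x.1 y.2 x.2)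
    · exact add_right_cancel h3
  haveI : Finite (↥S) := Subtype.finite
  have hle : b ≤ S.ncard := by
    have h := Nat.card_le_card_of_injective f hfinj
    rwa [myCardEven b (by omega), Nat.card_coe_set_eq] at h
  refine ⟨hle, fun hcard => ?_⟩
  have hbij : Function.Bijective f := by
    rw [Nat.bijective_iff_injective_and_card]
    exact ⟨hfinj, by rw [myCardEven b (by omega), Nat.card_coe_set_eq, hcard]⟩
  have hz : Sum.inr () ∉ S := by
    intro h
    obtain ⟨x, hx⟩ := hbij.2 ⟨_, h⟩
    rcases hf x with h' | h' <;> rw [hx] at h' <;> simp at h'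
  have hrS : Sum.inl r ∈ S :=
    (hS ((hH _ _).mpr (Or.inr (Or.inl ⟨rfl, rfl⟩)))).resolve_left hz
  have honly : ∀ x : ZMod (2*b), Even x.val → Sum.inl x ∈ S → Sum.inl (x+1) ∉ S := by
    intro x hx hx1 hx2
    obtain ⟨y, hy⟩ := hbij.2 ⟨_, hx1⟩
    obtain ⟨y', hy'⟩ := hbij.2 ⟨_, hx2⟩
    have h1 : (f y).1 = Sum.inl x := by rw [hy]
    have h2 : (f y').1 = Sum.inl (x+1) := by rw [hy']
    have hyx : y.1 = x := by
      rcases hf y with h | h <;> rw [h1] at h <;> have := Sum.inl_injective h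
      · exact this.symm
      · exact absurd this (hparity x y.1 hx y.2)
    have hy'x : y'.1 = x := by
      rcases hf y' with h | h <;> rw [h2] at h <;> have := Sum.inl_injective h
      · exact absurd this.symm (hparity y'.1 x y'.2 hx)
      · exact add_right_cancel this.symm
    have : y = y' := Subtype.ext (by rw [hyx, hy'x])
    rw [this, h2] at h1
    have := Sum.inl_injective h1
    have h4 : (1 : ZMod (2*b)) = 0 := add_eq_left.mp this
    have := congrArg ZMod.val h4
    rw [h1v, ZMod.val_zero] at this
    omega
  have noeven : ∀ x : ZMod (2*b), Even x.val → Sum.inl x ∉ S := by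
    intro x hx hxS
    have prop : ∀ m : ℕ, Even (x + ((2*m : ℕ) : ZMod (2*b))).val ∧
        Sum.inl (x + ((2*m : ℕ) : ZMod (2*b))) ∈ S := by
      intro m
      induction m with
      | zero => simpa using ⟨hx, hxS⟩
      | succ m ih =>
        have h1 : x + ((2*(m+1) : ℕ) : ZMod (2*b)) = (x + ((2*m : ℕ) : ZMod (2*b)) + 1) + 1 := by
          push_cast; ring
        have hnot := honly _ ih.1 ih.2
        have hmem := (hEdge _).resolve_left hnot
        constructor
        · rw [h1]
          have e1 := hstep (x + ((2*m : ℕ) : ZMod (2*b)))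
          have e2 := hstep (x + ((2*m : ℕ) : ZMod (2*b)) + 1)
          have := ih.1
          rw [Nat.even_iff] at this ⊢
          omega
        · rwa [h1]
    have hr1 : Even (r - 1).val := by
      have := hstep (r - 1)
      rw [sub_add_cancel] at this
      rw [Nat.odd_iff] at hr
      rw [Nat.even_iff]
      omega
    have hd : Even (r - 1 - x).val := by
      have h1 := hpar x (r - 1 - x)
      rw [add_sub_cancel] at h1
      rw [Nat.even_iff] at hx hr1 ⊢
      omega
    obtain ⟨m, hm⟩ := hd
    have hxm : x + ((2*m : ℕ) : ZMod (2*b)) = r - 1 := by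
      have h2m : (2*m : ℕ) = (r - 1 - x).val := by omega
      have : ((2*m : ℕ) : ZMod (2*b)) = r - 1 - x := by
        rw [h2m, ZMod.natCast_zmod_val]
      rw [this]; ring
    have hmem := (prop m).2
    rw [hxm] at hmem
    have := honly (r-1) hr1 hmem
    rw [sub_add_cancel] at this
    exact this hrS
  ext s
  simp only [Set.mem_setOf_eq]
  constructor
  · intro hsS
    obtain ⟨y, hy⟩ := hbij.2 ⟨s, hsS⟩
    have h1 : (f y).1 = s := by rw [hy]
    rcases hf y with h | h <;> rw [h1] at h
    · exact absurd (h ▸ hsS) (noeven y.1 y.2)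
    · refine ⟨y.1 + 1, ?_, h⟩
      have e1 := hstep y.1
      have e2 : Even (y.1).val := y.2
      rw [Nat.even_iff] at e2
      rw [Nat.odd_iff]
      omega
  · rintro ⟨t, ht, rfl⟩
    have het : Even (t - 1).val := by
      have := hstep (t - 1)
      rw [sub_add_cancel] at this
      rw [Nat.odd_iff] at ht
      rw [Nat.even_iff]
      omega
    have := (hEdge (t-1)).resolve_left (noeven (t-1) het)
    rwa [sub_add_cancel] at this
end

section
/- Let a, b, c, d ∈ ℝ² be four points such that no three of them are collinear, none of them lies in the convex hull of the other three, and b and d lie strictly on opposite sides of the line through a and c. Then the open segments ]a, c[ and ]b, d[ intersect in exactly one point, and moreover the open segment ]a, c[ is contained in the union of the interior of the triangle with vertices a, b, d, the relative interior of the segment [b, d], and the interior of the triangle with vertices c, b, d. -/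
open AffineMap

private lemma seg_mem_line {a c x : EuclideanSpace ℝ (Fin 2)}
    (hx : x ∈ openSegment ℝ a c) : x ∈ line[ℝ, a, c] := by
  rw [openSegment_eq_image_lineMap] at hx
  obtain ⟨t, _, rfl⟩ := hx
  exact AffineMap.lineMap_mem_affineSpan_pair _ _ _

/-- A point on the open segment from a vertex of a triangle to a point in the open
opposite edge lies in the interior of the triangle. -/
private lemma tri_interior (a b d p x : EuclideanSpace ℝ (Fin 2))
    (h : AffineIndependent ℝ ![a, b, d]) (hp : p ∈ openSegment ℝ b d)
    (hx : x ∈ openSegment ℝ a p) :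
    x ∈ interior (convexHull ℝ ({a, b, d} : Set (EuclideanSpace ℝ (Fin 2)))) := by
  have htop : affineSpan ℝ (Set.range ![a, b, d]) = ⊤ := by
    rw [h.affineSpan_eq_top_iff_card_eq_finrank_add_one]
    simp [finrank_euclideanSpace_fin]
  let B : AffineBasis (Fin 3) ℝ (EuclideanSpace ℝ (Fin 2)) := ⟨![a, b, d], h, htop⟩
  have hrange : Set.range (B : Fin 3 → EuclideanSpace ℝ (Fin 2))
      = ({a, b, d} : Set (EuclideanSpace ℝ (Fin 2))) := by
    have : (B : Fin 3 → EuclideanSpace ℝ (Fin 2)) = ![a, b, d] := rfl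
    rw [this]
    ext y
    constructor
    · rintro ⟨i, rfl⟩
      fin_cases i <;> simp
    · rintro (rfl | rfl | rfl)
      exacts [⟨0, rfl⟩, ⟨1, rfl⟩, ⟨2, rfl⟩]
  have hint := B.interior_convexHull
  rw [hrange] at hint
  rw [hint]
  rw [openSegment_eq_image_lineMap] at hp hx
  obtain ⟨t, ht, rfl⟩ := hp
  obtain ⟨s, hs, rfl⟩ := hx
  obtain ⟨ht0, ht1⟩ := ht
  obtain ⟨hs0, hs1⟩ := hs
  intro i
  have ha' : a = B 0 := rfl
  have hb' : b = B 1 := rfl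
  have hd' : d = B 2 := rfl
  have key : (B.coord i) (lineMap a (lineMap b d t) s)
      = lineMap ((B.coord i) a) (lineMap ((B.coord i) b) ((B.coord i) d) t) s := by
    rw [AffineMap.apply_lineMap, AffineMap.apply_lineMap]
  rw [key, ha', hb', hd', B.coord_apply, B.coord_apply, B.coord_apply]
  fin_cases i <;> simp [AffineMap.lineMap_apply_module] <;> nlinarith

/-- Let `a, b, c, d ∈ ℝ²` be four points, no three collinear, none in
the convex hull of the other three, with `b` and `d` strictly on opposite sides of the
line through `a` and `c`.  Then the open segments `]a, c[` and `]b, d[` meet in exactly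
one point, and `]a, c[` is contained in the union of the interior of triangle `abd`, the
relative interior (= open segment) of `[b, d]`, and the interior of triangle `cbd`. -/
theorem stmt7 (a b c d : EuclideanSpace ℝ (Fin 2))
    (h1 : ¬Collinear ℝ ({a, b, c} : Set (EuclideanSpace ℝ (Fin 2))))
    (h2 : ¬Collinear ℝ ({a, b, d} : Set (EuclideanSpace ℝ (Fin 2))))
    (h3 : ¬Collinear ℝ ({a, c, d} : Set (EuclideanSpace ℝ (Fin 2))))
    (h4 : ¬Collinear ℝ ({b, c, d} : Set (EuclideanSpace ℝ (Fin 2))))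
    (ha : a ∉ convexHull ℝ ({b, c, d} : Set (EuclideanSpace ℝ (Fin 2))))
    (hb : b ∉ convexHull ℝ ({a, c, d} : Set (EuclideanSpace ℝ (Fin 2))))
    (hc : c ∉ convexHull ℝ ({a, b, d} : Set (EuclideanSpace ℝ (Fin 2))))
    (hd : d ∉ convexHull ℝ ({a, b, c} : Set (EuclideanSpace ℝ (Fin 2))))
    (hside : (affineSpan ℝ ({a, c} : Set (EuclideanSpace ℝ (Fin 2)))).SOppSide b d) :
    (∃! p, p ∈ openSegment ℝ a c ∩ openSegment ℝ b d) ∧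
    openSegment ℝ a c ⊆
      interior (convexHull ℝ ({a, b, d} : Set (EuclideanSpace ℝ (Fin 2)))) ∪
        openSegment ℝ b d ∪
        interior (convexHull ℝ ({c, b, d} : Set (EuclideanSpace ℝ (Fin 2)))) := by
  obtain ⟨p, hpmem, hsbtw⟩ := hside.exists_sbtw
  have hpbd : p ∈ openSegment ℝ b d :=
    mem_openSegment_of_ne_left_right hsbtw.2.1.symm hsbtw.2.2.symm hsbtw.1.mem_segment
  have hpbd_line : p ∈ line[ℝ, b, d] := seg_mem_line hpbd
  -- get the parameter of p on line a c
  have hp' : p = (p -ᵥ a) +ᵥ a := by simp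
  obtain ⟨t, htp⟩ := (vadd_left_mem_affineSpan_pair).1 (hp' ▸ hpmem)
  have hplm : p = lineMap a c t := by
    rw [AffineMap.lineMap_apply, htp]
    simp
  -- rule out bad parameter values
  have ht0 : 0 < t := by
    rcases lt_trichotomy 0 t with h | h | h
    · exact h
    · exfalso
      have : p = a := by rw [hplm, ← h]; simp
      exact h2 (collinear_insert_of_mem_affineSpan_pair (this ▸ hpbd_line))
    · exfalso
      apply ha
      have hsub : segment ℝ p c ⊆ convexHull ℝ ({b, c, d} : Set (EuclideanSpace ℝ (Fin 2))) := by
        apply (convex_convexHull ℝ _).segment_subset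
        · exact segment_subset_convexHull (by simp) (by simp)
            (openSegment_subset_segment ℝ b d hpbd)
        · exact subset_convexHull ℝ _ (by simp)
      apply hsub
      rw [segment_eq_image_lineMap]
      refine ⟨-t / (1 - t), ⟨by
        have h1' : (0:ℝ) < -t := by linarith
        have h2' : (0:ℝ) < 1 - t := by linarith
        positivity, by rw [div_le_one (by linarith)]; linarith⟩, ?_⟩
      rw [hplm]
      have hne : (1:ℝ) - t ≠ 0 := by linarith
      simp only [AffineMap.lineMap_apply_module]
      match_scalars <;> field_simp <;> ring
  have ht1 : t < 1 := by
    rcases lt_trichotomy t 1 with h | h | h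
    · exact h
    · exfalso
      have : p = c := by rw [hplm, h]; simp
      have hcol : Collinear ℝ ({c, b, d} : Set (EuclideanSpace ℝ (Fin 2))) :=
        collinear_insert_of_mem_affineSpan_pair (this ▸ hpbd_line)
      exact h4 (hcol.subset (by rw [Set.insert_comm]))
    · exfalso
      apply hc
      have hsub : segment ℝ a p ⊆ convexHull ℝ ({a, b, d} : Set (EuclideanSpace ℝ (Fin 2))) := by
        apply (convex_convexHull ℝ _).segment_subset
        · exact subset_convexHull ℝ _ (by simp)
        · exact segment_subset_convexHull (by simp) (by simp)
            (openSegment_subset_segment ℝ b d hpbd)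
      apply hsub
      rw [segment_eq_image_lineMap]
      refine ⟨1 / t, ⟨by positivity, by rw [div_le_one (by linarith)]; linarith⟩, ?_⟩
      rw [hplm]
      have hne : t ≠ 0 := by linarith
      simp only [AffineMap.lineMap_apply_module]
      match_scalars <;> field_simp <;> ring
  have hpac : p ∈ openSegment ℝ a c := by
    rw [openSegment_eq_image_lineMap]
    exact ⟨t, ⟨ht0, ht1⟩, hplm.symm⟩
  constructor
  · refine ⟨p, ⟨hpac, hpbd⟩, ?_⟩
    rintro q ⟨hqac, hqbd⟩
    by_contra hne
    apply h1
    have hq_ac : q ∈ line[ℝ, a, c] := seg_mem_line hqac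
    have hq_bd : q ∈ line[ℝ, b, d] := seg_mem_line hqbd
    have hp_ac : p ∈ line[ℝ, a, c] := hpmem
    -- all of a, c lie on line[q, p], and all of b, d too
    have cac : Collinear ℝ ({q, p, a, c} : Set (EuclideanSpace ℝ (Fin 2))) := by
      have c1 : Collinear ℝ ({p, a, c} : Set (EuclideanSpace ℝ (Fin 2))) :=
        collinear_insert_of_mem_affineSpan_pair hp_ac
      refine (collinear_insert_iff_of_mem_affineSpan ?_).2 c1
      exact affineSpan_mono ℝ (by intro y hy; simp [hy, Set.subset_insert]) hq_ac
    have cbd : Collinear ℝ ({q, p, b, d} : Set (EuclideanSpace ℝ (Fin 2))) := by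
      have c1 : Collinear ℝ ({p, b, d} : Set (EuclideanSpace ℝ (Fin 2))) :=
        collinear_insert_of_mem_affineSpan_pair hpbd_line
      refine (collinear_insert_iff_of_mem_affineSpan ?_).2 c1
      exact affineSpan_mono ℝ (by intro y hy; simp [hy, Set.subset_insert]) hq_bd
    have hqp : q ≠ p := hne
    have ha' : a ∈ line[ℝ, q, p] :=
      cac.mem_affineSpan_of_mem_of_ne (by simp) (by simp) (by simp) hqp
    have hc' : c ∈ line[ℝ, q, p] :=
      cac.mem_affineSpan_of_mem_of_ne (by simp) (by simp) (by simp) hqp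
    have hb' : b ∈ line[ℝ, q, p] :=
      cbd.mem_affineSpan_of_mem_of_ne (by simp) (by simp) (by simp) hqp
    exact collinear_triple_of_mem_affineSpan_pair ha' hb' hc'
  · intro x hx
    rw [openSegment_eq_image_lineMap] at hx
    obtain ⟨s, ⟨hs0, hs1⟩, rfl⟩ := hx
    rcases lt_trichotomy s t with h | h | h
    · left; left
      refine tri_interior a b d p _ (affineIndependent_iff_not_collinear_set.2 h2) hpbd ?_
      rw [openSegment_eq_image_lineMap]
      refine ⟨s / t, ⟨by positivity, by rw [div_lt_one ht0]; exact h⟩, ?_⟩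
      rw [hplm]
      have hne : t ≠ 0 := by linarith
      simp only [AffineMap.lineMap_apply_module]
      match_scalars <;> field_simp <;> ring
    · left; right
      have : lineMap a c s = p := by rw [hplm, h]
      rw [this]; exact hpbd
    · right
      have h4' : ¬Collinear ℝ ({c, b, d} : Set (EuclideanSpace ℝ (Fin 2))) := by
        intro hcol; exact h4 (hcol.subset (by rw [Set.insert_comm]))
      refine tri_interior c b d p _ (affineIndependent_iff_not_collinear_set.2 h4') hpbd ?_
      rw [openSegment_eq_image_lineMap]
      refine ⟨(1 - s) / (1 - t), ⟨div_pos (by linarith) (by linarith),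
        by rw [div_lt_one (by linarith)]; linarith⟩, ?_⟩
      rw [hplm]
      have hne : (1:ℝ) - t ≠ 0 := by linarith
      simp only [AffineMap.lineMap_apply_module]
      match_scalars <;> field_simp <;> ring
end
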